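/- arXiv:2012.03582 — 5 statements merged into one kernel-verified Lean document; each statement's English description precedes it below -/
import Mathlib

section
/- Let v be a vertex of eligible tenacity t, p a minlevel(v) path from unmatched vertex f, and b = F(p, v) the highest vertex on p with tenacity > t. Suppose u lies on p between b and v with tenacity(u) < t, and the edge (u, w) lies on p with w higher than u on p and tenacity(w) = t. Then u is BFS-honest with respect to p. -/
open scoped Classical

universe u

variable {V : Type u}

/-- A finite-or-infinite undirected graph together with a matching. -/
structure MatchedGraph (V : Type u) where
  adj : V → V → Prop
  symm : ∀ u v, adj u v → adj v u
  loopless : ∀ v, ¬ adj v v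
  M : V → V → Prop
  M_symm : ∀ u v, M u v → M v u
  M_sub : ∀ u v, M u v → adj u v
  M_matching : ∀ u v w, M u v → M u w → v = w

namespace MatchedGraph

/-- A vertex is unmatched if no matched edge is incident to it. -/
def unmatched (g : MatchedGraph V) (v : V) : Prop := ∀ u, ¬ g.M v u

/-- `p` is a simple alternating path starting at `b` and ending at `v`,
whose first edge is unmatched and whose edges alternate unmatched/matched.
(The `i`-th edge is matched iff `i` is odd.) -/
def AltPath (g : MatchedGraph V) (p : List V) (b v : V) : Prop :=
  p.head? = some b ∧ p.getLast? = some v ∧ p.Nodup ∧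
  ∀ i, i + 1 < p.length →
    g.adj (p.getD i b) (p.getD (i + 1) b) ∧
      (g.M (p.getD i b) (p.getD (i + 1) b) ↔ i % 2 = 1)

/-- An alternating path from an *unmatched* vertex `f` to `v`. -/
def AltPathFrom (g : MatchedGraph V) (p : List V) (f v : V) : Prop :=
  g.unmatched f ∧ g.AltPath p f v

/-- Minimum length of an even alternating path from an unmatched vertex to `v`. -/
noncomputable def evenlevel (g : MatchedGraph V) (v : V) : ℕ∞ :=
  sInf {n : ℕ∞ | ∃ p f, g.AltPathFrom p f v ∧ Even (p.length - 1) ∧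
    n = ((p.length - 1 : ℕ) : ℕ∞)}

/-- Minimum length of an odd alternating path from an unmatched vertex to `v`. -/
noncomputable def oddlevel (g : MatchedGraph V) (v : V) : ℕ∞ :=
  sInf {n : ℕ∞ | ∃ p f, g.AltPathFrom p f v ∧ Odd (p.length - 1) ∧
    n = ((p.length - 1 : ℕ) : ℕ∞)}

noncomputable def tenacity (g : MatchedGraph V) (v : V) : ℕ∞ :=
  g.evenlevel v + g.oddlevel v

noncomputable def minlevel (g : MatchedGraph V) (v : V) : ℕ∞ :=
  min (g.evenlevel v) (g.oddlevel v)

noncomputable def maxlevel (g : MatchedGraph V) (v : V) : ℕ∞ :=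
  max (g.evenlevel v) (g.oddlevel v)

/-- Minimum length of an augmenting path: an alternating path between two
distinct unmatched vertices. -/
noncomputable def lm (g : MatchedGraph V) : ℕ∞ :=
  sInf {n : ℕ∞ | ∃ p f v, g.AltPathFrom p f v ∧ g.unmatched v ∧ f ≠ v ∧
    n = ((p.length - 1 : ℕ) : ℕ∞)}

/-- Minimum tenacity of any vertex. -/
noncomputable def tm (g : MatchedGraph V) : ℕ∞ := ⨅ v, g.tenacity v

/-- `p` is an `evenlevel(v)` path starting at the unmatched vertex `f`. -/
def IsEvenlevelPath (g : MatchedGraph V) (p : List V) (f v : V) : Prop :=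
  g.AltPathFrom p f v ∧ Even (p.length - 1) ∧
    ((p.length - 1 : ℕ) : ℕ∞) = g.evenlevel v

/-- `p` is an `oddlevel(v)` path starting at the unmatched vertex `f`. -/
def IsOddlevelPath (g : MatchedGraph V) (p : List V) (f v : V) : Prop :=
  g.AltPathFrom p f v ∧ Odd (p.length - 1) ∧
    ((p.length - 1 : ℕ) : ℕ∞) = g.oddlevel v

/-- `p` is a `minlevel(v)` path starting at the unmatched vertex `f`. -/
def IsMinlevelPath (g : MatchedGraph V) (p : List V) (f v : V) : Prop :=
  g.AltPathFrom p f v ∧ ((p.length - 1 : ℕ) : ℕ∞) = g.minlevel v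

/-- `p` is a `maxlevel(v)` path starting at the unmatched vertex `f`. -/
def IsMaxlevelPath (g : MatchedGraph V) (p : List V) (f v : V) : Prop :=
  g.AltPathFrom p f v ∧ ((p.length - 1 : ℕ) : ℕ∞) = g.maxlevel v

/-- The vertex at position `i` of `p` (whose prefix from `f` has length `i`)
is BFS-honest w.r.t. `p`. -/
def BFSHonest (g : MatchedGraph V) (p : List V) (f : V) (i : ℕ) : Prop :=
  (Even i → g.evenlevel (p.getD i f) = (i : ℕ∞)) ∧
  (Odd i → g.oddlevel (p.getD i f) = (i : ℕ∞))

/-- `u` is a predecessor of `v`: `(u, v)` is the last edge of some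
`minlevel(v)` path. -/
def IsPred (g : MatchedGraph V) (u v : V) : Prop :=
  ∃ p f, g.IsMinlevelPath p f v ∧ 2 ≤ p.length ∧ p.getD (p.length - 2) f = u

/-- A prop is an edge which is the last edge of a minlevel path to one of its
endpoints. -/
def IsPropEdge (g : MatchedGraph V) (u v : V) : Prop :=
  g.IsPred u v ∨ g.IsPred v u

/-- A bridge is an edge that is not a prop. -/
def IsBridge (g : MatchedGraph V) (u v : V) : Prop :=
  g.adj u v ∧ ¬ g.IsPropEdge u v

/-- Tenacity of an edge. -/
noncomputable def etenacity (g : MatchedGraph V) (u v : V) : ℕ∞ :=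
  if g.M u v then g.oddlevel u + g.oddlevel v + 1
  else g.evenlevel u + g.evenlevel v + 1

/-- The set `B(v)` of all `F(p, v)`: for each `evenlevel(v)` or `oddlevel(v)`
path `p`, the vertex on `p` farthest from the unmatched endpoint among the
vertices of tenacity greater than `tenacity(v)`. -/
def Bset (g : MatchedGraph V) (v : V) : Set V :=
  {b | ∃ p f i, (g.IsEvenlevelPath p f v ∨ g.IsOddlevelPath p f v) ∧
    i < p.length ∧ b = p.getD i f ∧ g.tenacity v < g.tenacity b ∧
    ∀ k, i < k → k < p.length → g.tenacity (p.getD k f) ≤ g.tenacity v}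

/-- `b` is the (unique) base of `v`. -/
def baseOf (g : MatchedGraph V) (v b : V) : Prop := g.Bset v = {b}

/-- Iterated bases: `iterBase k v b` means `b = base^k(v)` (with `base^0(v) = v`). -/
def iterBase (g : MatchedGraph V) : ℕ → V → V → Prop
  | 0, v, b => v = b
  | k + 1, v, b => ∃ u, g.iterBase k v u ∧ g.baseOf u b

/-- A vertex is outer if `evenlevel(v) < oddlevel(v)`. -/
def IsOuter (g : MatchedGraph V) (v : V) : Prop := g.evenlevel v < g.oddlevel v

/-- A vertex is inner if it is not outer. -/
def IsInner (g : MatchedGraph V) (v : V) : Prop := g.oddlevel v ≤ g.evenlevel v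

/-- The set `S_{b,t}` of vertices of tenacity `t` with base `b`. -/
def Sset (g : MatchedGraph V) (t : ℕ) (b : V) : Set V :=
  {v | g.tenacity v = (t : ℕ∞) ∧ g.baseOf v b}

/-- The blossom `B_{b,t}`, defined recursively. -/
def blossom (g : MatchedGraph V) : ℕ → V → Set V
  | 0, _ => ∅
  | 1, _ => ∅
  | t + 2, b => g.Sset (t + 2) b ∪
      ⋃ v ∈ {v | (v ∈ g.Sset (t + 2) b ∨ v = b) ∧ g.IsOuter v}, blossom g t v

/-- The nesting depth `N(B_{b,t})` of a blossom. -/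
noncomputable def ndepth (g : MatchedGraph V) [Fintype V] : ℕ → V → ℕ
  | 0, _ => 0
  | 1, _ => 0
  | t + 2, b =>
    if (g.Sset (t + 2) b).Nonempty then
      1 + Finset.univ.sup (fun v =>
        if (v ∈ g.Sset (t + 2) b ∨ v = b) ∧ g.IsOuter v then ndepth g t v else 0)
    else ndepth g t b

/-- `evenlevel(b; v)`: minimum even length of an alternating path from `b` to
`v` starting with an unmatched edge. -/
noncomputable def evenlevelFrom (g : MatchedGraph V) (b v : V) : ℕ∞ :=
  sInf {n : ℕ∞ | ∃ p, g.AltPath p b v ∧ Even (p.length - 1) ∧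
    n = ((p.length - 1 : ℕ) : ℕ∞)}

/-- `oddlevel(b; v)`: minimum odd length of an alternating path from `b` to
`v` starting with an unmatched edge. -/
noncomputable def oddlevelFrom (g : MatchedGraph V) (b v : V) : ℕ∞ :=
  sInf {n : ℕ∞ | ∃ p, g.AltPath p b v ∧ Odd (p.length - 1) ∧
    n = ((p.length - 1 : ℕ) : ℕ∞)}

end MatchedGraph


namespace MatchedGraph

/-- auxiliary: alternating chain with parity offset `par`. -/
def Ch (g : MatchedGraph V) (l : List V) (b : V) (par : ℕ) : Prop :=
  l.head? = some b ∧ l.Nodup ∧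
  ∀ m, (h : m + 1 < l.length) →
    g.adj (l[m]'(by omega)) (l[m+1]'h) ∧
      (g.M (l[m]'(by omega)) (l[m+1]'h) ↔ (m + par) % 2 = 1)

lemma ch_ne_nil {g : MatchedGraph V} {l : List V} {b par} (h : g.Ch l b par) : l ≠ [] := by
  intro hl; rw [hl] at h; simp [Ch] at h

lemma altPath_iff_ch {g : MatchedGraph V} {l : List V} {b v : V} :
    g.AltPath l b v ↔ (g.Ch l b 0 ∧ l.getLast? = some v) := by
  constructor
  · rintro ⟨h1, h2, h3, h4⟩
    refine ⟨⟨h1, h3, fun m h => ?_⟩, h2⟩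
    have := h4 m h
    rw [List.getD_eq_getElem l b (by omega), List.getD_eq_getElem l b h] at this
    simpa using this
  · rintro ⟨⟨h1, h3, h4⟩, h2⟩
    refine ⟨h1, h2, h3, fun m h => ?_⟩
    have := h4 m h
    rw [List.getD_eq_getElem l b (by omega), List.getD_eq_getElem l b h]
    simpa using this

lemma ch_take {g : MatchedGraph V} {l : List V} {b : V} {par : ℕ} (h : g.Ch l b par)
    (n : ℕ) (hn : n < l.length) :
    g.Ch (l.take (n+1)) b par ∧ (l.take (n+1)).getLast? = some (l[n]) ∧
      (l.take (n+1)).length = n + 1 := by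
  obtain ⟨h1, h2, h3⟩ := h
  have hlen : (l.take (n+1)).length = n + 1 := by
    rw [List.length_take]; omega
  have hget : ∀ m, (hm : m < (l.take (n+1)).length) → (l.take (n+1))[m] = l[m]'(by
      rw [List.length_take] at hm; omega) := fun m hm => List.getElem_take ..
  refine ⟨⟨?_, h2.sublist (List.take_sublist _ _), fun m hm => ?_⟩, ?_, hlen⟩
  · cases l with
    | nil => simp at hn
    | cons a t => simpa using h1
  · rw [hget m (by omega), hget (m+1) hm]
    exact h3 m (by rw [hlen] at hm; omega)
  · rw [List.getLast?_eq_getElem?, hlen, List.getElem?_eq_getElem (by rw [hlen]; omega)]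
    simp only [Nat.add_sub_cancel]
    rw [hget n (by omega)]

lemma ch_drop {g : MatchedGraph V} {l : List V} {b : V} (h : g.Ch l b 0)
    (β : ℕ) (hβ : β < l.length) :
    g.Ch (l.drop β) (l[β]) β ∧ (l.drop β).getLast? = l.getLast? ∧
      (l.drop β).length = l.length - β := by
  obtain ⟨h1, h2, h3⟩ := h
  have hlen : (l.drop β).length = l.length - β := List.length_drop ..
  have hget : ∀ m, (hm : m < (l.drop β).length) → (l.drop β)[m] = l[β + m]'(by
      rw [List.length_drop] at hm; omega) := fun m hm => List.getElem_drop ..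
  refine ⟨⟨?_, h2.sublist (List.drop_sublist _ _), fun m hm => ?_⟩, ?_, hlen⟩
  · rw [List.head?_eq_getElem?, List.getElem?_eq_getElem (by omega), hget 0 (by omega)]
    simp
  · have hm' : β + m + 1 < l.length := by rw [hlen] at hm; omega
    have h4 := h3 (β + m) hm'
    have e1 : (l.drop β)[m]'(by omega) = l[β + m]'(by omega) := hget m (by omega)
    have e2 : (l.drop β)[m+1]'hm = l[β + m + 1]'hm' := by
      rw [hget (m+1) hm]; first | rfl | (congr 1 <;> omega)
    rw [e1, e2]
    have hpar : (β + m + 0) % 2 = 1 ↔ (m + β) % 2 = 1 := by omega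
    exact ⟨h4.1, h4.2.trans hpar⟩
  · have hl1 : l.length - 1 < l.length := by omega
    have hd1 : (l.drop β).length - 1 < (l.drop β).length := by rw [hlen]; omega
    have hidx : β + ((List.drop β l).length - 1) < l.length := by rw [hlen]; omega
    rw [List.getLast?_eq_getElem?, List.getLast?_eq_getElem?,
      List.getElem?_eq_getElem hd1, List.getElem?_eq_getElem hl1, hget _ hd1,
      ← List.getD_eq_getElem l b hidx, ← List.getD_eq_getElem l b hl1]
    have hidx2 : β + ((List.drop β l).length - 1) = l.length - 1 := by rw [hlen]; omega
    rw [hidx2]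

lemma gidx {l : List V} {i j : ℕ} (hij : i = j) {hi : i < l.length} {hj : j < l.length} :
    l[i]'hi = l[j]'hj := by subst hij; rfl

lemma ch_revseg {g : MatchedGraph V} {l : List V} {b : V} (h : g.Ch l b 0)
    (a β : ℕ) (hab : a ≤ β) (hβ : β < l.length) :
    g.Ch (((l.take (β+1)).drop a).reverse) (l[β]) (β+1) ∧
      (((l.take (β+1)).drop a).reverse).getLast? = some (l[a]'(by omega)) ∧
      (((l.take (β+1)).drop a).reverse).length = β + 1 - a ∧
      ∀ m, (hm : m < (((l.take (β+1)).drop a).reverse).length) →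
        (((l.take (β+1)).drop a).reverse)[m] = l[β - m]'(by omega) := by
  obtain ⟨h1, h2, h3⟩ := h
  have hilen : ((l.take (β+1)).drop a).length = β + 1 - a := by
    rw [List.length_drop, List.length_take]; omega
  have hlen : (((l.take (β+1)).drop a).reverse).length = β + 1 - a := by
    rw [List.length_reverse]; exact hilen
  have hget : ∀ m, (hm : m < (((l.take (β+1)).drop a).reverse).length) →
      (((l.take (β+1)).drop a).reverse)[m] = l[β - m]'(by omega) := by
    intro m hm
    have hm' : m < β + 1 - a := by rw [hlen] at hm; omega
    have e0 : (((l.take (β+1)).drop a).reverse)[m] =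
        ((l.take (β+1)).drop a)[((l.take (β+1)).drop a).length - 1 - m]'(by omega) :=
      List.getElem_reverse ..
    have e1 : ((l.take (β+1)).drop a)[((l.take (β+1)).drop a).length - 1 - m]'(by omega) =
        (l.take (β+1))[a + (((l.take (β+1)).drop a).length - 1 - m)]'(by
          rw [List.length_take] at *; rw [List.length_drop] at *; omega) :=
      List.getElem_drop ..
    have e2 : (l.take (β+1))[a + (((l.take (β+1)).drop a).length - 1 - m)]'(by
          rw [List.length_take, List.length_drop, List.length_take]; omega) =
        l[a + (((l.take (β+1)).drop a).length - 1 - m)]'(by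
          rw [List.length_drop, List.length_take] at *; omega) :=
      List.getElem_take ..
    exact e0.trans (e1.trans (e2.trans (gidx (by rw [hilen]; omega))))
  refine ⟨⟨?_, ?_, fun m hm => ?_⟩, ?_, hlen, hget⟩
  · rw [List.head?_eq_getElem?, List.getElem?_eq_getElem (by omega), hget 0 (by omega)]
    exact congrArg some (gidx (by omega))
  · exact List.nodup_reverse.mpr
      (h2.sublist ((List.drop_sublist _ _).trans (List.take_sublist _ _)))
  · have hm' : m + 1 < β + 1 - a := by rw [hlen] at hm; omega
    have hm2 : (β - m - 1) + 1 < l.length := by omega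
    have h4 := h3 (β - m - 1) hm2
    have e1 : (((l.take (β+1)).drop a).reverse)[m]'(by omega) = l[β - m - 1 + 1]'hm2 :=
      (hget m (by omega)).trans (gidx (by omega))
    have e2 : (((l.take (β+1)).drop a).reverse)[m+1]'hm = l[β - m - 1]'(by omega) :=
      (hget (m+1) hm).trans (gidx (by omega))
    rw [e1, e2]
    have hpar : (β - m - 1 + 0) % 2 = 1 ↔ (m + (β + 1)) % 2 = 1 := by omega
    constructor
    · exact g.symm _ _ h4.1
    · constructor
      · intro hM; exact hpar.mp (h4.2.mp (g.M_symm _ _ hM))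
      · intro hp2; exact g.M_symm _ _ (h4.2.mpr (hpar.mpr hp2))
  · have hd1 : (((l.take (β+1)).drop a).reverse).length - 1 <
        (((l.take (β+1)).drop a).reverse).length := by rw [hlen]; omega
    rw [List.getLast?_eq_getElem?, List.getElem?_eq_getElem hd1, hget _ hd1]
    exact congrArg some (gidx (by rw [hlen]; omega))

lemma ch_append {g : MatchedGraph V} {A B : List V} {f z : V} {pb : ℕ}
    (hA : g.Ch A f 0) (hB : g.Ch B z pb) (hlast : A.getLast? = some z)
    (hpar : pb % 2 = (A.length - 1) % 2) (hdisj : A.Disjoint B.tail) :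
    g.Ch (A ++ B.tail) f 0 ∧ (A ++ B.tail).getLast? = B.getLast? ∧
      (A ++ B.tail).length = A.length + B.length - 1 := by
  obtain ⟨hA1, hA2, hA3⟩ := hA
  obtain ⟨hB1, hB2, hB3⟩ := hB
  have hAne : A ≠ [] := by intro hh; rw [hh] at hA1; simp at hA1
  have hBne : B ≠ [] := by intro hh; rw [hh] at hB1; simp at hB1
  have hAlen : 1 ≤ A.length := List.length_pos_iff.mpr hAne
  have hBlen : 1 ≤ B.length := List.length_pos_iff.mpr hBne
  have htl : B.tail.length = B.length - 1 := List.length_tail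
  have hClen : (A ++ B.tail).length = A.length + B.length - 1 := by
    rw [List.length_append, htl]; omega
  have hAz : A[A.length - 1]'(by omega) = z := by
    rw [List.getLast?_eq_getElem?, List.getElem?_eq_getElem (by omega)] at hlast
    exact Option.some_injective _ hlast
  have hB0 : B[0]'(by omega) = z := by
    rw [List.head?_eq_getElem?, List.getElem?_eq_getElem (by omega)] at hB1
    exact Option.some_injective _ hB1
  have hgA : ∀ r, (hr : r < A.length) → (A ++ B.tail)[r]'(by rw [hClen]; omega) = A[r] :=
    fun r hr => List.getElem_append_left hr
  have hgB : ∀ r, (hr : A.length ≤ r) → (hr2 : r < A.length + B.length - 1) →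
      (A ++ B.tail)[r]'(by rw [hClen]; omega) = B[r - A.length + 1]'(by omega) := by
    intro r hr hr2
    rw [List.getElem_append_right hr, List.getElem_tail]
  refine ⟨⟨?_, ?_, fun m hm => ?_⟩, ?_, hClen⟩
  · rw [List.head?_append]
    cases hhA : A.head? with
    | none => rw [hhA] at hA1; exact absurd hA1 (by simp)
    | some x => rw [hhA] at hA1; simpa using hA1
  · exact List.nodup_append'.mpr ⟨hA2, hB2.sublist (List.tail_sublist B), hdisj⟩
  · rw [hClen] at hm
    rcases Nat.lt_or_ge (m+1) A.length with hcase | hcase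
    · have e1 := hgA m (by omega)
      have e2 := hgA (m+1) hcase
      rw [e1, e2]
      have h4 := hA3 m hcase
      exact h4
    · have e2 := hgB (m+1) hcase (by omega)
      rw [e2]
      rcases Nat.lt_or_ge m A.length with hc2 | hc2
      · have hmA : m = A.length - 1 := by omega
        have e1 := hgA m hc2
        rw [e1]
        have h1B : 1 < B.length := by omega
        have h4 := hB3 0 h1B
        rw [hB0] at h4
        have eA : A[m]'hc2 = z := (gidx hmA).trans hAz
        rw [eA]
        have e3 : B[m + 1 - A.length + 1]'(by omega) = B[1]'h1B := gidx (by omega)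
        rw [e3]
        have hiff : (0 + pb) % 2 = 1 ↔ (m + 0) % 2 = 1 := by omega
        exact ⟨h4.1, h4.2.trans hiff⟩
      · have e1 := hgB m hc2 (by omega)
        rw [e1]
        have hmB : (m - A.length + 1) + 1 < B.length := by omega
        have h4 := hB3 (m - A.length + 1) hmB
        have e3 : B[m + 1 - A.length + 1]'(by omega) = B[(m - A.length + 1) + 1]'hmB :=
          gidx (by omega)
        rw [e3]
        have hiff : (m - A.length + 1 + pb) % 2 = 1 ↔ (m + 0) % 2 = 1 := by omega
        exact ⟨h4.1, h4.2.trans hiff⟩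
  · rw [List.getLast?_append]
    cases hBt : B.tail with
    | nil =>
      have hB1' : B.length = 1 := by
        have h5 : B.tail.length = B.length - 1 := List.length_tail; rw [hBt] at h5; simp at h5; omega
      have e5 : B.getLast? = some z := by
        rw [List.getLast?_eq_getElem?, List.getElem?_eq_getElem (by omega)]
        exact congrArg some ((gidx (by omega)).trans hB0)
      simp only [List.getLast?_nil, Option.none_or]
      rw [hlast, e5]
    | cons x xs =>
      have hBtne : B.tail ≠ [] := by rw [hBt]; simp
      have htlen : 1 ≤ B.tail.length := List.length_pos_iff.mpr hBtne
      have e4 : B.tail.getLast? = B.getLast? := by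
        rw [List.getLast?_eq_getElem?, List.getLast?_eq_getElem? (l := B),
          List.getElem?_eq_getElem (show B.tail.length - 1 < B.tail.length by omega),
          List.getElem?_eq_getElem (show B.length - 1 < B.length by omega)]
        rw [List.getElem_tail]
        exact congrArg some (gidx (by rw [htl] at htlen ⊢; omega))
      rw [← hBt, e4]
      cases hBg : B.getLast? with
      | none =>
        rw [List.getLast?_eq_getElem?, List.getElem?_eq_getElem (by omega)] at hBg
        simp at hBg
      | some y => simp


lemma level_le_of_ch {g : MatchedGraph V} {C : List V} {f y : V}
    (hum : g.unmatched f) (hch : g.Ch C f 0) (hlast : C.getLast? = some y) :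
    (Even (C.length - 1) → g.evenlevel y ≤ ((C.length - 1 : ℕ) : ℕ∞)) ∧
      (Odd (C.length - 1) → g.oddlevel y ≤ ((C.length - 1 : ℕ) : ℕ∞)) := by
  have hap : g.AltPathFrom C f y := ⟨hum, altPath_iff_ch.mpr ⟨hch, hlast⟩⟩
  exact ⟨fun hpar => sInf_le ⟨C, f, hap, hpar, rfl⟩,
    fun hpar => sInf_le ⟨C, f, hap, hpar, rfl⟩⟩

lemma minlevel_le_of_ch {g : MatchedGraph V} {C : List V} {f y : V}
    (hum : g.unmatched f) (hch : g.Ch C f 0) (hlast : C.getLast? = some y) :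
    g.minlevel y ≤ ((C.length - 1 : ℕ) : ℕ∞) := by
  rcases Nat.even_or_odd (C.length - 1) with hpar | hpar
  · exact le_trans (min_le_left _ _) ((level_le_of_ch hum hch hlast).1 hpar)
  · exact le_trans (min_le_right _ _) ((level_le_of_ch hum hch hlast).2 hpar)

lemma stretch_core {g : MatchedGraph V} {v f : V} {t : ℕ} {p : List V}
    (humf : g.unmatched f) (hchp : g.Ch p f 0) (hlastp : p.getLast? = some v)
    (hminl : ((p.length - 1 : ℕ) : ℕ∞) = g.minlevel v)
    (ht : g.tenacity v = (t : ℕ∞))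
    {i : ℕ} (hi : i + 1 < p.length)
    (hw : g.tenacity (p[i+1]'hi) = (t : ℕ∞))
    {q : List V} {f' : V} (hq : g.AltPathFrom q f' (p[i]'(by omega)))
    (hqpar : (q.length - 1) % 2 = i % 2) (hqlen : q.length - 1 < i) : False := by
  classical
  obtain ⟨humf', hq2⟩ := hq
  obtain ⟨hchq, hlastq⟩ := altPath_iff_ch.mp hq2
  have hpnil := ch_ne_nil hchp
  have hqnil := ch_ne_nil hchq
  have hplen1 : 1 ≤ p.length := List.length_pos_iff.mpr hpnil
  have hqlen1 : 1 ≤ q.length := List.length_pos_iff.mpr hqnil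
  have hminv : g.minlevel v = ((p.length - 1 : ℕ) : ℕ∞) := hminl.symm
  -- 2·(p.length - 1) ≤ t
  have h2L : 2 * (p.length - 1) ≤ t := by
    have hcast : (((p.length - 1) + (p.length - 1) : ℕ) : ℕ∞) ≤ (t : ℕ∞) := by
      push_cast
      calc ((p.length - 1 : ℕ) : ℕ∞) + ((p.length - 1 : ℕ) : ℕ∞)
          = g.minlevel v + g.minlevel v := by rw [hminv]
        _ ≤ g.minlevel v + g.maxlevel v := add_le_add (le_refl _) min_le_max
        _ = g.evenlevel v + g.oddlevel v := min_add_max _ _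
        _ = (t : ℕ∞) := ht
    have h6 : (p.length - 1) + (p.length - 1) ≤ t := by exact_mod_cast hcast
    omega
  have hqell : q[q.length - 1]'(by omega) = p[i]'(by omega) := by
    rw [List.getLast?_eq_getElem?, List.getElem?_eq_getElem (by omega)] at hlastq
    exact Option.some_injective _ hlastq
  have hPex : ∃ s, ∃ k, i ≤ k ∧ ∃ (hk : k < p.length) (hs : s < q.length),
      q[s]'hs = p[k]'hk := ⟨q.length - 1, i, le_refl i, by omega, by omega, hqell⟩
  set α := Nat.find hPex with hαdef
  obtain ⟨β, hiβ, hβp, hαq, hqαβ⟩ := Nat.find_spec hPex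
  have hαle : α ≤ q.length - 1 :=
    Nat.find_le ⟨i, le_refl i, by omega, by omega, hqell⟩
  have hD1 : ∀ s k, (hs : s < q.length) → (hk : k < p.length) → i ≤ k →
      q[s]'hs = p[k]'hk → α ≤ s := by
    intro s k hs hk hik he
    by_contra hlt
    exact Nat.find_min hPex (by omega) ⟨k, hik, hk, hs, he⟩
  have hβL : β ≤ p.length - 1 := by omega
  have hαβ : α < β := by omega
  obtain ⟨hchA, hlastA, hlenA⟩ := ch_take hchq α (by omega)
  have hlastA' : (q.take (α+1)).getLast? = some (p[β]'hβp) := by rw [hlastA, hqαβ]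
  rcases eq_or_ne (α % 2) (β % 2) with hpar2 | hpar2
  · -- Case I : ascending splice, contradicts minimality of minlevel(v)
    obtain ⟨hchB, hlastB, hlenB⟩ := ch_drop hchp β hβp
    have hdisj : (q.take (α+1)).Disjoint (p.drop β).tail := by
      intro x hxA hxB
      rw [List.mem_iff_getElem] at hxA hxB
      obtain ⟨s, hs, hsx⟩ := hxA
      obtain ⟨r, hr, hrx⟩ := hxB
      have hs2 : s < q.length ∧ s < α + 1 := by
        rw [List.length_take] at hs; omega
      have hr2 : β + (r + 1) < p.length := by
        rw [List.length_tail, List.length_drop] at hr; omega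
      have hsq : (q.take (α+1))[s]'hs = q[s]'hs2.1 := List.getElem_take ..
      have hrd : ((p.drop β).tail)[r]'hr = (p.drop β)[r+1]'(by
          rw [List.length_tail] at hr; omega) := List.getElem_tail ..
      have hrp : (p.drop β)[r+1]'(by rw [List.length_drop]; omega) =
          p[β + (r+1)]'hr2 := List.getElem_drop ..
      have he : q[s]'hs2.1 = p[β + (r+1)]'hr2 := by
        rw [← hsq, hsx, ← hrp, ← hrd, hrx]
      have hαs := hD1 s (β + (r+1)) hs2.1 hr2 (by omega) he
      have hsα : s = α := by omega
      subst hsα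
      have he2 : p[β]'hβp = p[β + (r+1)]'hr2 := hqαβ.symm.trans he
      have := (List.Nodup.getElem_inj_iff hchp.2.1).mp he2
      omega
    have hparA : β % 2 = ((q.take (α+1)).length - 1) % 2 := by rw [hlenA]; omega
    obtain ⟨hchC, hlastC, hlenC⟩ := ch_append hchA hchB hlastA' hparA hdisj
    have hCv : ((q.take (α+1)) ++ (p.drop β).tail).getLast? = some v := by
      rw [hlastC, hlastB, hlastp]
    have hCl : ((q.take (α+1)) ++ (p.drop β).tail).length - 1
        = α + (p.length - 1 - β) := by
      rw [hlenC, hlenA, hlenB]; omega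
    have hmle := minlevel_le_of_ch humf' hchC hCv
    rw [hCl, hminv] at hmle
    have hfin : (p.length - 1 : ℕ) ≤ α + (p.length - 1 - β) := by exact_mod_cast hmle
    omega
  · -- Case II : descending splice, contradicts tenacity(w) = t
    have hβi : i + 1 ≤ β := by
      rcases eq_or_ne β i with hbe | hne2
      · exfalso
        have he : q[α]'hαq = q[q.length - 1]'(by omega) :=
          (hqαβ.trans (gidx hbe)).trans hqell.symm
        have hαq2 := (List.Nodup.getElem_inj_iff hchq.2.1).mp he
        omega
      · omega
    obtain ⟨hchB, hlastB, hlenB, hgetB⟩ := ch_revseg hchp (i+1) β hβi hβp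
    have hdisj : (q.take (α+1)).Disjoint (((p.take (β+1)).drop (i+1)).reverse).tail := by
      intro x hxA hxB
      rw [List.mem_iff_getElem] at hxA hxB
      obtain ⟨s, hs, hsx⟩ := hxA
      obtain ⟨r, hr, hrx⟩ := hxB
      have hs2 : s < q.length ∧ s < α + 1 := by
        rw [List.length_take] at hs; omega
      have hrB : r + 1 < (((p.take (β+1)).drop (i+1)).reverse).length := by
        rw [List.length_tail] at hr; omega
      have hr3 : r + 1 < β + 1 - (i + 1) := by rw [hlenB] at hrB; omega
      have hr2 : β - (r + 1) < p.length := by omega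
      have hsq : (q.take (α+1))[s]'hs = q[s]'hs2.1 := List.getElem_take ..
      have hrd : ((((p.take (β+1)).drop (i+1)).reverse).tail)[r]'hr =
          (((p.take (β+1)).drop (i+1)).reverse)[r+1]'hrB := List.getElem_tail ..
      have hrp := hgetB (r+1) hrB
      have he : q[s]'hs2.1 = p[β - (r+1)]'hr2 := by
        rw [← hsq, hsx, ← hrp, ← hrd, hrx]
      have hαs := hD1 s (β - (r+1)) hs2.1 hr2 (by omega) he
      have hsα : s = α := by omega
      subst hsα
      have he2 : p[β]'hβp = p[β - (r+1)]'hr2 := hqαβ.symm.trans he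
      have := (List.Nodup.getElem_inj_iff hchp.2.1).mp he2
      omega
    have hparA : (β + 1) % 2 = ((q.take (α+1)).length - 1) % 2 := by rw [hlenA]; omega
    obtain ⟨hchC, hlastC, hlenC⟩ := ch_append hchA hchB hlastA' hparA hdisj
    have hCw : ((q.take (α+1)) ++ (((p.take (β+1)).drop (i+1)).reverse).tail).getLast?
        = some (p[i+1]'hi) := by
      rw [hlastC, hlastB]
    have hCl : ((q.take (α+1)) ++ (((p.take (β+1)).drop (i+1)).reverse).tail).length - 1
        = α + β - i - 1 := by
      rw [hlenC, hlenA, hlenB]; omega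
    have hlev := level_le_of_ch humf' hchC hCw
    rw [hCl] at hlev
    obtain ⟨hchW, hlastW, hlenW⟩ := ch_take hchp (i+1) hi
    have hlenW2 : (p.take (i+1+1)).length - 1 = i + 1 := by rw [hlenW]; omega
    have hlevW := level_le_of_ch humf hchW hlastW
    rw [hlenW2] at hlevW
    have htw : g.evenlevel (p[i+1]'hi) + g.oddlevel (p[i+1]'hi) = (t : ℕ∞) := hw
    rcases Nat.even_or_odd (i+1) with hev | hod
    · have h7 := hlevW.1 hev
      have h8 : Odd (α + β - i - 1) := by
        rw [Nat.odd_iff]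
        have := Nat.even_iff.mp hev
        omega
      have h9 := hlev.2 h8
      have h10 : (t : ℕ∞) ≤ ((i + 1 + (α + β - i - 1) : ℕ) : ℕ∞) := by
        rw [← htw]
        push_cast
        exact add_le_add h7 h9
      have h11 : t ≤ i + 1 + (α + β - i - 1) := by exact_mod_cast h10
      omega
    · have h7 := hlevW.2 hod
      have h8 : Even (α + β - i - 1) := by
        rw [Nat.even_iff]
        have := Nat.odd_iff.mp hod
        omega
      have h9 := hlev.1 h8
      have h10 : (t : ℕ∞) ≤ ((i + 1 + (α + β - i - 1) : ℕ) : ℕ∞) := by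
        rw [← htw]
        push_cast
        rw [add_comm ((i:ℕ∞) + 1)]
        exact add_le_add h9 h7
      have h11 : t ≤ i + 1 + (α + β - i - 1) := by exact_mod_cast h10
      omega

end MatchedGraph


/-- Let `v` have eligible tenacity `t`, `p` be a `minlevel(v)` path
from an unmatched vertex `f`, and let the vertex at position `j` of `p` be the
highest vertex of tenacity `> t` on `p` (i.e. `b = F(p, v)`). If the vertex `u`
at position `i ≥ j` has `tenacity(u) < t` and the next vertex `w` on `p`
(higher than `u`) has `tenacity(w) = t`, then `u` is BFS-honest w.r.t. `p`. -/
theorem bfsHonest_of_stretch (g : MatchedGraph V) (v f : V) (t : ℕ)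
    (ht : g.tenacity v = (t : ℕ∞))
    (helig1 : g.tm ≤ (t : ℕ∞)) (helig2 : (t : ℕ∞) < g.lm)
    (p : List V) (hp : g.IsMinlevelPath p f v)
    (j : ℕ) (hj : j < p.length) (hbt : (t : ℕ∞) < g.tenacity (p.getD j f))
    (hjhigh : ∀ k, j < k → k < p.length → ¬ ((t : ℕ∞) < g.tenacity (p.getD k f)))
    (i : ℕ) (hji : j ≤ i) (hi : i + 1 < p.length)
    (hu : g.tenacity (p.getD i f) < (t : ℕ∞))
    (hw : g.tenacity (p.getD (i + 1) f) = (t : ℕ∞)) :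
    g.BFSHonest p f i := by
  classical
  obtain ⟨⟨humf, hap⟩, hminl⟩ := hp
  obtain ⟨hchp, hlastp⟩ := MatchedGraph.altPath_iff_ch.mp hap
  have hpi : i < p.length := by omega
  have hgetD : p.getD i f = p[i]'hpi := List.getD_eq_getElem p f hpi
  have hw' : g.tenacity (p[i+1]'hi) = (t : ℕ∞) := by
    rw [← List.getD_eq_getElem p f hi]; exact hw
  refine ⟨?_, ?_⟩
  · intro hievn
    rw [hgetD]
    obtain ⟨hchA, hlastA, hlenA⟩ := MatchedGraph.ch_take hchp i hpi
    have hlenA2 : (p.take (i+1)).length - 1 = i := by rw [hlenA]; omega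
    have hlevA := MatchedGraph.level_le_of_ch humf hchA hlastA
    rw [hlenA2] at hlevA
    refine le_antisymm (hlevA.1 hievn) (not_lt.mp ?_)
    intro hlt
    obtain ⟨n, hnmem, hnlt⟩ := sInf_lt_iff.mp hlt
    obtain ⟨q, f', hqf, hqev, rfl⟩ := hnmem
    have hlen2 : q.length - 1 < i := by exact_mod_cast hnlt
    exact MatchedGraph.stretch_core humf hchp hlastp hminl ht hi hw' hqf
      (by have h1 := Nat.even_iff.mp hqev; have h2 := Nat.even_iff.mp hievn; omega) hlen2
  · intro hiodd
    rw [hgetD]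
    obtain ⟨hchA, hlastA, hlenA⟩ := MatchedGraph.ch_take hchp i hpi
    have hlenA2 : (p.take (i+1)).length - 1 = i := by rw [hlenA]; omega
    have hlevA := MatchedGraph.level_le_of_ch humf hchA hlastA
    rw [hlenA2] at hlevA
    refine le_antisymm (hlevA.2 hiodd) (not_lt.mp ?_)
    intro hlt
    obtain ⟨n, hnmem, hnlt⟩ := sInf_lt_iff.mp hlt
    obtain ⟨q, f', hqf, hqodd, rfl⟩ := hnmem
    have hlen2 : q.length - 1 < i := by exact_mod_cast hnlt
    exact MatchedGraph.stretch_core humf hchp hlastp hminl ht hi hw' hqf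
      (by have h1 := Nat.odd_iff.mp hqodd; have h2 := Nat.odd_iff.mp hiodd; omega) hlen2
end

section
/- Every vertex v of minimum tenacity t_m has a well-defined base: the set B(v) of vertices F(p, v), taken over all evenlevel(v) and oddlevel(v) paths p, is a singleton, provided t_m < l_m. -/
open scoped Classical

universe u

variable {V : Type u}

namespace MatchedGraph

variable {g : MatchedGraph V}

/-- An alternating path, presented as a function on indices. -/
structure AP (g : MatchedGraph V) where
  n : ℕ
  w : ℕ → V
  inj : ∀ ⦃i j⦄, i ≤ n → j ≤ n → w i = w j → i = j
  alt : ∀ i, i + 1 ≤ n → g.adj (w i) (w (i+1)) ∧ (g.M (w i) (w (i+1)) ↔ i % 2 = 1)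

namespace AP

/-- The underlying list of an `AP`. -/
def toList (P : AP g) : List V := (List.range (P.n+1)).map P.w

lemma toList_length (P : AP g) : P.toList.length = P.n + 1 := by
  simp [toList]

lemma toList_getD (P : AP g) (i : ℕ) (hi : i ≤ P.n) (b : V) :
    P.toList.getD i b = P.w i := by
  rw [toList, List.getD_eq_getElem?_getD]
  simp [Nat.lt_succ_of_le hi]

lemma toList_altPath (P : AP g) : g.AltPath P.toList (P.w 0) (P.w P.n) := by
  refine ⟨?_, ?_, ?_, ?_⟩
  · rw [toList, List.range_succ_eq_map]
    simp
  · rw [List.getLast?_eq_getElem?]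
    simp [toList]
  · rw [toList]
    refine List.Nodup.map_on ?_ List.nodup_range
    intro x hx y hy hxy
    exact P.inj (Nat.lt_succ_iff.mp (List.mem_range.mp hx))
      (Nat.lt_succ_iff.mp (List.mem_range.mp hy)) hxy
  · intro i hi
    rw [toList_length] at hi
    have h1 : i ≤ P.n := by omega
    have h2 : i + 1 ≤ P.n := by omega
    rw [toList_getD P i h1, toList_getD P (i+1) h2]
    exact P.alt i h2

/-- Truncation of an alternating path. -/
def trunc (P : AP g) (a : ℕ) (ha : a ≤ P.n) : AP g where
  n := a
  w := P.w
  inj := fun i j hi hj h => P.inj (hi.trans ha) (hj.trans ha) h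
  alt := fun i hi => P.alt i (hi.trans ha)

@[simp] lemma trunc_n (P : AP g) (a ha) : (P.trunc a ha).n = a := rfl
@[simp] lemma trunc_w (P : AP g) (a ha) : (P.trunc a ha).w = P.w := rfl

end AP

lemma ofAltPath {p : List V} {f v : V} (h : g.AltPath p f v) :
    ∃ P : AP g, P.w = (fun j => p.getD j f) ∧ P.n + 1 = p.length ∧
      P.w 0 = f ∧ P.w P.n = v := by
  obtain ⟨hh, hl, hnd, halt⟩ := h
  have hne : p ≠ [] := by intro he; rw [he] at hh; simp at hh
  have hlen : 1 ≤ p.length := List.length_pos_iff.mpr hne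
  have hgetD : ∀ i (hi : i < p.length), p.getD i f = p.get ⟨i, hi⟩ := by
    intro i hi
    rw [List.getD_eq_getElem?_getD, List.getElem?_eq_getElem hi]
    rfl
  refine ⟨⟨p.length - 1, fun j => p.getD j f, ?_, ?_⟩, rfl, (by show p.length - 1 + 1 = p.length; omega), ?_, ?_⟩
  · intro i j hi hj hij
    beta_reduce at hi hj ⊢
    have hi' : i < p.length := by omega
    have hj' : j < p.length := by omega
    beta_reduce at hij
    rw [hgetD i hi', hgetD j hj'] at hij
    have := List.nodup_iff_injective_get.mp hnd hij
    simpa using this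
  · intro i hi
    beta_reduce at hi ⊢
    exact halt i (by omega)
  · show p.getD 0 f = f
    have : p.head? = some (p.getD 0 f) := by
      cases p with
      | nil => simp at hh
      | cons a l => simp
    rw [this] at hh
    exact (Option.some_inj.mp hh)
  · show p.getD (p.length - 1) f = v
    have : p.getLast? = some (p.getD (p.length - 1) f) := by
      rw [List.getLast?_eq_getElem?, List.getElem?_eq_getElem (by omega),
        hgetD _ (by omega)]
      rfl
    rw [this] at hl
    exact Option.some_inj.mp hl

end MatchedGraph
namespace MatchedGraph

variable {g : MatchedGraph V}

lemma evenlevel_le_AP (P : AP g) (hf : g.unmatched (P.w 0)) (he : P.n % 2 = 0) :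
    g.evenlevel (P.w P.n) ≤ (P.n : ℕ∞) := by
  apply sInf_le
  refine ⟨P.toList, P.w 0, ⟨hf, P.toList_altPath⟩, ?_, ?_⟩
  · rw [P.toList_length]
    simp only [Nat.add_sub_cancel]
    exact Nat.even_iff.mpr he
  · rw [P.toList_length]
    simp

lemma oddlevel_le_AP (P : AP g) (hf : g.unmatched (P.w 0)) (he : P.n % 2 = 1) :
    g.oddlevel (P.w P.n) ≤ (P.n : ℕ∞) := by
  apply sInf_le
  refine ⟨P.toList, P.w 0, ⟨hf, P.toList_altPath⟩, ?_, ?_⟩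
  · rw [P.toList_length]
    simp only [Nat.add_sub_cancel]
    exact Nat.odd_iff.mpr he
  · rw [P.toList_length]
    simp

lemma level_le_AP (P : AP g) (hf : g.unmatched (P.w 0)) :
    (P.n % 2 = 0 → g.evenlevel (P.w P.n) ≤ (P.n : ℕ∞)) ∧
    (P.n % 2 = 1 → g.oddlevel (P.w P.n) ≤ (P.n : ℕ∞)) :=
  ⟨fun h => evenlevel_le_AP P hf h, fun h => oddlevel_le_AP P hf h⟩

/-- sInf of a set of casts of naturals is attained. -/
lemma sInf_attained {S : Set ℕ∞} (hS : ∀ x ∈ S, ∃ m : ℕ, x = (m : ℕ∞))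
    (hne : sInf S ≠ ⊤) : sInf S ∈ S := by
  have hSne : S.Nonempty := by
    by_contra h
    rw [Set.not_nonempty_iff_eq_empty.mp h] at hne
    simp at hne
  set T : Set ℕ := {m : ℕ | (m : ℕ∞) ∈ S} with hT
  have hTne : T.Nonempty := by
    obtain ⟨x, hx⟩ := hSne
    obtain ⟨m, rfl⟩ := hS x hx
    exact ⟨m, hx⟩
  have hmem : sInf T ∈ T := Nat.sInf_mem hTne
  have : sInf S = ((sInf T : ℕ) : ℕ∞) := by
    apply le_antisymm
    · exact sInf_le hmem
    · apply le_sInf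
      intro x hx
      obtain ⟨m, rfl⟩ := hS x hx
      exact_mod_cast Nat.sInf_le hx
  rw [this]
  exact hmem

lemma exists_even_AP {u : V} (h : g.evenlevel u ≠ ⊤) :
    ∃ S : AP g, g.unmatched (S.w 0) ∧ S.w S.n = u ∧ S.n % 2 = 0 ∧
      ((S.n : ℕ) : ℕ∞) = g.evenlevel u := by
  have hmem := sInf_attained (S := {n : ℕ∞ | ∃ p f, g.AltPathFrom p f u ∧
      Even (p.length - 1) ∧ n = ((p.length - 1 : ℕ) : ℕ∞)})
    (by rintro x ⟨p, f, _, _, rfl⟩; exact ⟨_, rfl⟩) h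
  obtain ⟨p, f, ⟨hf, hap⟩, hev, heq⟩ := hmem
  obtain ⟨P, hw, hn, h0, hend⟩ := ofAltPath hap
  refine ⟨P, h0 ▸ hf, hend, ?_, ?_⟩
  · have : P.n = p.length - 1 := by omega
    rw [this]
    exact Nat.even_iff.mp hev
  · have : P.n = p.length - 1 := by omega
    rw [this, ← heq]
    rfl

lemma exists_odd_AP {u : V} (h : g.oddlevel u ≠ ⊤) :
    ∃ S : AP g, g.unmatched (S.w 0) ∧ S.w S.n = u ∧ S.n % 2 = 1 ∧
      ((S.n : ℕ) : ℕ∞) = g.oddlevel u := by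
  have hmem := sInf_attained (S := {n : ℕ∞ | ∃ p f, g.AltPathFrom p f u ∧
      Odd (p.length - 1) ∧ n = ((p.length - 1 : ℕ) : ℕ∞)})
    (by rintro x ⟨p, f, _, _, rfl⟩; exact ⟨_, rfl⟩) h
  obtain ⟨p, f, ⟨hf, hap⟩, hev, heq⟩ := hmem
  obtain ⟨P, hw, hn, h0, hend⟩ := ofAltPath hap
  refine ⟨P, h0 ▸ hf, hend, ?_, ?_⟩
  · have : P.n = p.length - 1 := by omega
    rw [this]
    exact Nat.odd_iff.mp hev
  · have : P.n = p.length - 1 := by omega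
    rw [this, ← heq]
    rfl

/-- the evenlevel of an unmatched vertex is 0. -/
lemma evenlevel_unmatched {f : V} (hf : g.unmatched f) : g.evenlevel f = 0 := by
  apply le_antisymm _ zero_le
  apply sInf_le
  refine ⟨[f], f, ⟨hf, ?_⟩, by simp, by simp⟩
  refine ⟨rfl, rfl, List.nodup_singleton f, ?_⟩
  intro i hi
  simp at hi

/-- any odd path ending at an unmatched vertex is augmenting. -/
lemma lm_le_oddlevel_unmatched {f : V} (hf : g.unmatched f) :
    g.lm ≤ g.oddlevel f := by
  apply le_sInf
  rintro x ⟨p, f'', ⟨hf'', hap⟩, hodd, rfl⟩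
  apply sInf_le
  refine ⟨p, f'', f, ⟨hf'', hap⟩, hf, ?_, rfl⟩
  obtain ⟨P, hw, hn, h0, hend⟩ := ofAltPath hap
  intro hcon
  have h1 : 1 ≤ p.length - 1 := Nat.one_le_iff_ne_zero.mpr (by
    intro h0'
    rw [h0'] at hodd
    simp [Nat.odd_iff] at hodd)
  have hP1 : 1 ≤ P.n := by omega
  have : P.w 0 = P.w P.n := by rw [h0, hend, hcon]
  have := P.inj (Nat.zero_le _) (le_refl _) this
  omega

/-- tm lower bound for every vertex. -/
lemma tm_le_tenacity (w : V) : g.tm ≤ g.tenacity w := iInf_le _ w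

lemma lm_le_tenacity_unmatched {f : V} (hf : g.unmatched f) :
    g.lm ≤ g.tenacity f := by
  calc g.lm ≤ g.oddlevel f := lm_le_oddlevel_unmatched hf
  _ ≤ g.evenlevel f + g.oddlevel f := le_add_self
  _ = g.tenacity f := rfl

end MatchedGraph
namespace MatchedGraph

variable {g : MatchedGraph V}

/-- Crossing-parity bound: if two alternating paths from unmatched vertices
meet at positions of opposite parity, the tenacity of the common vertex is
at most the sum of positions. -/
lemma tenacity_le_cross (P Q : AP g) (hPf : g.unmatched (P.w 0))
    (hQf : g.unmatched (Q.w 0)) {x z : ℕ} (hx : x ≤ P.n) (hz : z ≤ Q.n)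
    (heq : P.w x = Q.w z) (hpar : (x + z) % 2 = 1) :
    g.tenacity (P.w x) ≤ ((x + z : ℕ) : ℕ∞) := by
  have hPt := level_le_AP (P.trunc x hx) (by simpa using hPf)
  have hQt := level_le_AP (Q.trunc z hz) (by simpa using hQf)
  simp only [AP.trunc_n, AP.trunc_w] at hPt hQt
  rcases Nat.even_or_odd x with hxe | hxo
  · have hx2 : x % 2 = 0 := Nat.even_iff.mp hxe
    have hz2 : z % 2 = 1 := by omega
    have h1 : g.evenlevel (P.w x) ≤ (x : ℕ∞) := hPt.1 hx2
    have h2 : g.oddlevel (P.w x) ≤ (z : ℕ∞) := by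
      rw [heq]; exact hQt.2 hz2
    calc g.tenacity (P.w x) = g.evenlevel (P.w x) + g.oddlevel (P.w x) := rfl
    _ ≤ (x : ℕ∞) + (z : ℕ∞) := add_le_add h1 h2
    _ = ((x + z : ℕ) : ℕ∞) := by push_cast; ring
  · have hx2 : x % 2 = 1 := Nat.odd_iff.mp hxo
    have hz2 : z % 2 = 0 := by omega
    have h1 : g.oddlevel (P.w x) ≤ (x : ℕ∞) := hPt.2 hx2
    have h2 : g.evenlevel (P.w x) ≤ (z : ℕ∞) := by
      rw [heq]; exact hQt.1 hz2
    calc g.tenacity (P.w x) = g.evenlevel (P.w x) + g.oddlevel (P.w x) := rfl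
    _ ≤ (z : ℕ∞) + (x : ℕ∞) := add_le_add h2 h1
    _ = ((x + z : ℕ) : ℕ∞) := by push_cast; ring

/-- Splice a prefix of `P` (up to `a`) with the suffix of `Q` (from `c` on),
where `P.w a = Q.w c` and `a ≡ c (mod 2)`. -/
lemma spliceUp (P Q : AP g) (a c : ℕ) (ha : a ≤ P.n) (hc : c ≤ Q.n)
    (hj : P.w a = Q.w c) (hpar : a % 2 = c % 2)
    (hdisj : ∀ x ≤ a, ∀ z, c < z → z ≤ Q.n → P.w x ≠ Q.w z) :
    ∃ R : AP g, R.n = a + (Q.n - c) ∧ R.w 0 = P.w 0 ∧ R.w R.n = Q.w Q.n := by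
  set m : ℕ := a + (Q.n - c) with hm
  set w : ℕ → V := fun i => if i ≤ a then P.w i else Q.w (i - a + c) with hwdef
  have hq : ∀ i, a ≤ i → w i = Q.w (i - a + c) := by
    intro i hi
    rcases eq_or_lt_of_le hi with h | h
    · subst h
      simp only [hwdef, le_refl, if_pos, Nat.sub_self, Nat.zero_add]
      exact hj
    · simp only [hwdef]
      rw [if_neg (show ¬ i ≤ a by omega)]
  have hp : ∀ i, i ≤ a → w i = P.w i := by
    intro i hi
    simp only [hwdef, if_pos hi]
  refine ⟨⟨m, w, ?_, ?_⟩, rfl, ?_, ?_⟩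
  · -- injectivity
    intro i j hi hj' heq
    have hi : i ≤ m := hi
    have hj' : j ≤ m := hj'
    rcases le_or_gt i a with hia | hia <;> rcases le_or_gt j a with hja | hja
    · rw [hp i hia, hp j hja] at heq
      exact P.inj (hia.trans ha) (hja.trans ha) heq
    · rw [hp i hia, hq j (le_of_lt hja)] at heq
      exact absurd heq (hdisj i hia _ (by omega) (by omega))
    · rw [hq i (le_of_lt hia), hp j hja] at heq
      exact absurd heq.symm (hdisj j hja _ (by omega) (by omega))
    · rw [hq i (le_of_lt hia), hq j (le_of_lt hja)] at heq
      have := Q.inj (i := i - a + c) (j := j - a + c) (by omega) (by omega) heq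
      omega
  · -- alternation
    intro i hi
    have hi : i + 1 ≤ m := hi
    rcases le_or_gt (i+1) a with hia | hia
    · rw [hp i (by omega), hp (i+1) hia]
      exact P.alt i (hia.trans ha)
    · have hia' : a ≤ i := by omega
      rw [hq i hia', hq (i+1) (by omega)]
      have e1 : i + 1 - a + c = (i - a + c) + 1 := by omega
      rw [e1]
      have := Q.alt (i - a + c) (by omega)
      refine ⟨this.1, ?_⟩
      rw [this.2]
      constructor <;> intro h <;> omega
  · show w 0 = P.w 0
    rw [hp 0 (Nat.zero_le _)]
  · show w m = Q.w Q.n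
    rw [hq m (by omega)]
    congr 1
    omega

/-- Splice all of `P` (ending at the common endpoint `v`) with the reverse of
the suffix of `Q` from `m` on;  requires `P.n + Q.n` odd. -/
lemma spliceDown (P Q : AP g) (hv : P.w P.n = Q.w Q.n) (m : ℕ) (hm : m ≤ Q.n)
    (hpar : (P.n + Q.n) % 2 = 1)
    (hdisj : ∀ x ≤ P.n, ∀ z, m ≤ z → z < Q.n → P.w x ≠ Q.w z) :
    ∃ R : AP g, R.n = P.n + (Q.n - m) ∧ R.w 0 = P.w 0 ∧ R.w R.n = Q.w m := by
  set N : ℕ := P.n + (Q.n - m) with hN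
  set w : ℕ → V := fun i => if i ≤ P.n then P.w i else Q.w (Q.n - (i - P.n))
    with hwdef
  have hq : ∀ i, P.n ≤ i → w i = Q.w (Q.n - (i - P.n)) := by
    intro i hi
    rcases eq_or_lt_of_le hi with h | h
    · subst h
      simp only [hwdef, le_refl, if_pos, Nat.sub_self, Nat.sub_zero]
      exact hv
    · simp only [hwdef]
      rw [if_neg (show ¬ i ≤ P.n by omega)]
  have hp : ∀ i, i ≤ P.n → w i = P.w i := by
    intro i hi
    simp only [hwdef, if_pos hi]
  refine ⟨⟨N, w, ?_, ?_⟩, rfl, ?_, ?_⟩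
  · intro i j hi hj' heq
    have hi : i ≤ N := hi
    have hj' : j ≤ N := hj'
    rcases le_or_gt i P.n with hia | hia <;> rcases le_or_gt j P.n with hja | hja
    · rw [hp i hia, hp j hja] at heq
      exact P.inj hia hja heq
    · rw [hp i hia, hq j (le_of_lt hja)] at heq
      exact absurd heq (hdisj i hia _ (by omega) (by omega))
    · rw [hq i (le_of_lt hia), hp j hja] at heq
      exact absurd heq.symm (hdisj j hja _ (by omega) (by omega))
    · rw [hq i (le_of_lt hia), hq j (le_of_lt hja)] at heq
      have := Q.inj (i := Q.n - (i - P.n)) (j := Q.n - (j - P.n))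
        (by omega) (by omega) heq
      omega
  · intro i hi
    have hi : i + 1 ≤ N := hi
    rcases le_or_gt (i+1) P.n with hia | hia
    · rw [hp i (by omega), hp (i+1) hia]
      exact P.alt i hia
    · have hia' : P.n ≤ i := by omega
      rw [hq i hia', hq (i+1) (by omega)]
      have e1 : Q.n - (i - P.n) = (Q.n - (i + 1 - P.n)) + 1 := by omega
      rw [e1]
      set k : ℕ := Q.n - (i + 1 - P.n) with hk
      have halt := Q.alt k (by omega)
      refine ⟨g.symm _ _ halt.1, ?_⟩
      have hMsymm : g.M (Q.w (k+1)) (Q.w k) ↔ g.M (Q.w k) (Q.w (k+1)) :=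
        ⟨g.M_symm _ _, g.M_symm _ _⟩
      rw [hMsymm, halt.2]
      constructor <;> intro h <;> omega
  · show w 0 = P.w 0
    rw [hp 0 (Nat.zero_le _)]
  · show w N = Q.w m
    rw [hq N (by omega)]
    congr 1
    omega

end MatchedGraph
namespace MatchedGraph

variable {g : MatchedGraph V}

/-- Common vertices of a minimum even path and a minimum odd path to a
minimum-tenacity vertex occur at equal positions. -/
lemma align {t : ℕ} {v : V} (P Q : AP g)
    (htm : g.tm = (t : ℕ∞))
    (hPf : g.unmatched (P.w 0)) (hQf : g.unmatched (Q.w 0))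
    (hPv : P.w P.n = v) (hQv : Q.w Q.n = v)
    (hPe : ((P.n : ℕ) : ℕ∞) = g.evenlevel v) (hPp : P.n % 2 = 0)
    (hQo : ((Q.n : ℕ) : ℕ∞) = g.oddlevel v) (hQp : Q.n % 2 = 1)
    (hsum : P.n + Q.n = t) :
    ∀ a c, a ≤ P.n → c ≤ Q.n → P.w a = Q.w c →
      a = c ∨ (a = P.n ∧ c = Q.n) := by
  have L0 : ∀ u : V, (t : ℕ∞) ≤ g.tenacity u := by
    intro u
    rw [← htm]
    exact g.tm_le_tenacity u
  have parity : ∀ a c, a ≤ P.n → c ≤ Q.n → P.w a = Q.w c →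
      ¬(a = P.n ∧ c = Q.n) → a % 2 = c % 2 := by
    intro a c ha hc heq hne
    by_contra hpar
    have hoddsum : (a + c) % 2 = 1 := by omega
    have hlt : a + c < t := by
      rcases Nat.lt_or_ge a P.n with h | h
      · omega
      · have ha' : a = P.n := by omega
        have hc' : c ≠ Q.n := fun h' => hne ⟨ha', h'⟩
        omega
    have h1 := g.tenacity_le_cross P Q hPf hQf ha hc heq hoddsum
    have h2 : (t : ℕ∞) ≤ ((a + c : ℕ) : ℕ∞) := le_trans (L0 (P.w a)) h1
    rw [Nat.cast_le] at h2
    omega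
  have noLT : ¬ ∃ a, ∃ c, a ≤ P.n ∧ c ≤ Q.n ∧ P.w a = Q.w c ∧ a < c ∧
      ¬(a = P.n ∧ c = Q.n) := by
    intro hex
    set SP : Set ℕ := {a | ∃ c, a ≤ P.n ∧ c ≤ Q.n ∧ P.w a = Q.w c ∧ a < c ∧
      ¬(a = P.n ∧ c = Q.n)} with hSP
    have hne0 : SP.Nonempty := by
      obtain ⟨a, c, h⟩ := hex
      exact ⟨a, c, h⟩
    obtain ⟨c0, ha0P, hc0Q, heq0, hlt0, hne0'⟩ := Nat.sInf_mem hne0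
    set a0 := sInf SP
    have hpar0 := parity a0 c0 ha0P hc0Q heq0 hne0'
    have hdisj : ∀ x ≤ a0, ∀ z, c0 < z → z ≤ Q.n → P.w x ≠ Q.w z := by
      intro x hx z hz1 hz2 heq2
      by_cases hxz : x = P.n ∧ z = Q.n
      · have hxa : x = a0 := by omega
        have h3 : Q.w c0 = Q.w Q.n := by
          rw [← heq0, ← hxz.2, ← hxa]
          exact heq2
        have := Q.inj hc0Q (le_refl _) h3
        exact hne0' ⟨by omega, by omega⟩
      · have hxlt : x < z := by omega
        have hxSP : x ∈ SP := ⟨z, by omega, hz2, heq2, hxlt, hxz⟩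
        have hle := Nat.sInf_le hxSP
        have hxa0 : x = a0 := by omega
        rw [hxa0] at heq2
        have := Q.inj hz2 hc0Q (heq2.symm.trans heq0)
        omega
    obtain ⟨R, hRn, hR0, hRe⟩ := g.spliceUp P Q a0 c0 ha0P hc0Q heq0 hpar0 hdisj
    have hodd : g.oddlevel v ≤ (R.n : ℕ∞) := by
      rw [← hQv, ← hRe]
      exact oddlevel_le_AP R (hR0 ▸ hPf) (by omega)
    rw [← hQo, Nat.cast_le] at hodd
    omega
  have noGT : ¬ ∃ c, ∃ a, c ≤ Q.n ∧ a ≤ P.n ∧ Q.w c = P.w a ∧ c < a ∧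
      ¬(a = P.n ∧ c = Q.n) := by
    intro hex
    set SP : Set ℕ := {c | ∃ a, c ≤ Q.n ∧ a ≤ P.n ∧ Q.w c = P.w a ∧ c < a ∧
      ¬(a = P.n ∧ c = Q.n)} with hSP
    have hne0 : SP.Nonempty := by
      obtain ⟨c, a, h⟩ := hex
      exact ⟨c, a, h⟩
    obtain ⟨a0, hc0Q, ha0P, heq0, hlt0, hne0'⟩ := Nat.sInf_mem hne0
    set c0 := sInf SP
    have hpar0 : c0 % 2 = a0 % 2 := (parity a0 c0 ha0P hc0Q heq0.symm hne0').symm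
    have hdisj : ∀ x ≤ c0, ∀ z, a0 < z → z ≤ P.n → Q.w x ≠ P.w z := by
      intro x hx z hz1 hz2 heq2
      by_cases hxz : z = P.n ∧ x = Q.n
      · have hxa : x = c0 := by omega
        have h3 : Q.w c0 = P.w P.n := by
          rw [← hxa, ← hxz.1]
          exact heq2
        have := P.inj ha0P (le_refl _) (heq0.symm.trans h3)
        exact hne0' ⟨by omega, by omega⟩
      · have hxlt : x < z := by omega
        have hxSP : x ∈ SP := ⟨z, by omega, hz2, heq2, hxlt, hxz⟩
        have hle := Nat.sInf_le hxSP
        have hxa0 : x = c0 := by omega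
        rw [hxa0] at heq2
        have := P.inj hz2 ha0P (heq2.symm.trans heq0)
        omega
    obtain ⟨R, hRn, hR0, hRe⟩ := g.spliceUp Q P c0 a0 hc0Q ha0P heq0 hpar0 hdisj
    have hev : g.evenlevel v ≤ (R.n : ℕ∞) := by
      rw [← hPv, ← hRe]
      exact evenlevel_le_AP R (hR0 ▸ hQf) (by omega)
    rw [← hPe, Nat.cast_le] at hev
    omega
  intro a c ha hc heq
  by_cases hne : a = P.n ∧ c = Q.n
  · exact Or.inr hne
  · left
    rcases lt_trichotomy a c with h | h | h
    · exact absurd ⟨a, c, ha, hc, heq, h, hne⟩ noLT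
    · exact h
    · exact absurd ⟨c, a, hc, ha, heq.symm, h, hne⟩ noGT

end MatchedGraph
namespace MatchedGraph

variable {g : MatchedGraph V}

/-- If a vertex on `B` below `v` has tenacity `> t`, then `A` intersects the
part of `B` above it. -/
lemma down_gen {t : ℕ} (A B : AP g)
    (htm : g.tm = (t : ℕ∞))
    (hA0 : g.unmatched (A.w 0)) (hB0 : g.unmatched (B.w 0))
    (hv : A.w A.n = B.w B.n) (hpar : (A.n + B.n) % 2 = 1)
    (hsum : A.n + B.n = t) (m : ℕ) (hm : m ≤ B.n)
    (hten : (t : ℕ∞) < g.tenacity (B.w m)) :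
    ∃ j k, j ≤ A.n ∧ m ≤ k ∧ k < B.n ∧ A.w j = B.w k := by
  by_contra hcon
  push_neg at hcon
  have hdisj : ∀ x ≤ A.n, ∀ z, m ≤ z → z < B.n → A.w x ≠ B.w z := by
    intro x hx z hz1 hz2 heq
    exact (hcon x z hx hz1 hz2) heq
  obtain ⟨R, hRn, hR0, hRe⟩ := g.spliceDown A B hv m hm hpar hdisj
  have hcross := g.tenacity_le_cross R (B.trunc m hm) (hR0 ▸ hA0) hB0
    (le_refl R.n) (le_refl m) (by simpa [AP.trunc_w] using hRe) (by omega)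
  rw [hRe] at hcross
  have h2 : (t : ℕ∞) < ((R.n + m : ℕ) : ℕ∞) := lt_of_lt_of_le hten hcross
  rw [Nat.cast_lt] at h2
  omega

/-- There is no short alternating path (of matching parity) to an aligned
common vertex of minimal even/odd paths: prefix optimality. -/
lemma noshort {t : ℕ} {v : V} (P Q : AP g)
    (htm : g.tm = (t : ℕ∞))
    (hPf : g.unmatched (P.w 0)) (hQf : g.unmatched (Q.w 0))
    (hPv : P.w P.n = v) (hQv : Q.w Q.n = v)
    (hPe : ((P.n : ℕ) : ℕ∞) = g.evenlevel v) (hPp : P.n % 2 = 0)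
    (hQo : ((Q.n : ℕ) : ℕ∞) = g.oddlevel v) (hQp : Q.n % 2 = 1)
    (hsum : P.n + Q.n = t)
    (k : ℕ) (hk1 : k < P.n) (hk2 : k < Q.n) (hal : P.w k = Q.w k)
    (S : AP g) (hS0 : g.unmatched (S.w 0)) (hSe : S.w S.n = P.w k)
    (hSpar : S.n % 2 = k % 2) : k ≤ S.n := by
  have L0 : ∀ u : V, (t : ℕ∞) ≤ g.tenacity u := by
    intro u
    rw [← htm]
    exact g.tm_le_tenacity u
  by_contra hcon
  push_neg at hcon
  set Pr : ℕ → Prop := fun y => k ≤ y ∧ ∃ x, x ≤ S.n ∧ S.w x = Q.w y with hPr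
  have hPk : Pr k := ⟨le_refl _, S.n, le_refl _, by rw [hSe, hal]⟩
  set ys : ℕ := Nat.findGreatest Pr Q.n with hys
  have hysP : Pr ys := Nat.findGreatest_spec (le_of_lt hk2) hPk
  have hysle : ys ≤ Q.n := Nat.findGreatest_le _
  have hky : k ≤ ys := Nat.le_findGreatest (le_of_lt hk2) hPk
  obtain ⟨-, xs, hxs, heqs⟩ := hysP
  have hyQ : ys < Q.n := by
    rcases eq_or_lt_of_le hysle with h | h
    · exfalso
      have hSv : S.w xs = v := by
        rw [heqs, h, hQv]
      have hlev := level_le_AP (S.trunc xs hxs) (by simpa using hS0)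
      simp only [AP.trunc_n, AP.trunc_w, hSv] at hlev
      rcases Nat.even_or_odd xs with hx | hx
      · have := hlev.1 (Nat.even_iff.mp hx)
        rw [← hPe, Nat.cast_le] at this
        omega
      · have := hlev.2 (Nat.odd_iff.mp hx)
        rw [← hQo, Nat.cast_le] at this
        omega
    · exact h
  have hpxy : xs % 2 = ys % 2 := by
    by_contra hpar
    have hcross := g.tenacity_le_cross S Q hS0 hQf hxs (le_of_lt hyQ)
      heqs (by omega)
    have h2 : (t : ℕ∞) ≤ ((xs + ys : ℕ) : ℕ∞) :=
      le_trans (by rw [heqs] at hcross ⊢; exact L0 (Q.w ys)) hcross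
    rw [Nat.cast_le] at h2
    omega
  have hdisj : ∀ x ≤ xs, ∀ z, ys < z → z ≤ Q.n → S.w x ≠ Q.w z := by
    intro x hx z hz1 hz2 heq2
    have hPz : Pr z := ⟨by omega, x, by omega, heq2⟩
    exact Nat.findGreatest_is_greatest hz1 hz2 hPz
  obtain ⟨R, hRn, hR0, hRe⟩ := g.spliceUp S Q xs ys hxs (le_of_lt hyQ)
    heqs hpxy hdisj
  have hodd : g.oddlevel v ≤ (R.n : ℕ∞) := by
    rw [← hQv, ← hRe]
    exact oddlevel_le_AP R (hR0 ▸ hS0) (by omega)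
  rw [← hQo, Nat.cast_le] at hodd
  omega

/-- Levels of an aligned common vertex are exactly its position. -/
lemma level_eq_aligned {t : ℕ} {v : V} (P Q : AP g)
    (htm : g.tm = (t : ℕ∞))
    (hPf : g.unmatched (P.w 0)) (hQf : g.unmatched (Q.w 0))
    (hPv : P.w P.n = v) (hQv : Q.w Q.n = v)
    (hPe : ((P.n : ℕ) : ℕ∞) = g.evenlevel v) (hPp : P.n % 2 = 0)
    (hQo : ((Q.n : ℕ) : ℕ∞) = g.oddlevel v) (hQp : Q.n % 2 = 1)
    (hsum : P.n + Q.n = t)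
    (k : ℕ) (hk1 : k < P.n) (hk2 : k < Q.n) (hal : P.w k = Q.w k) :
    (k % 2 = 0 → g.evenlevel (P.w k) = (k : ℕ∞)) ∧
    (k % 2 = 1 → g.oddlevel (P.w k) = (k : ℕ∞)) := by
  have hle := level_le_AP (P.trunc k (le_of_lt hk1)) (by simpa using hPf)
  simp only [AP.trunc_n, AP.trunc_w] at hle
  constructor
  · intro hk
    apply le_antisymm (hle.1 hk)
    by_contra h
    push_neg at h
    have hne : g.evenlevel (P.w k) ≠ ⊤ := fun hh => by
      rw [hh] at h
      exact (not_top_lt h)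
    obtain ⟨S, hS0, hSe, hSpar, hSlen⟩ := exists_even_AP hne
    have hlt : (S.n : ℕ∞) < (k : ℕ∞) := by
      rw [hSlen]
      exact h
    rw [Nat.cast_lt] at hlt
    have := noshort P Q htm hPf hQf hPv hQv hPe hPp hQo hQp hsum k hk1 hk2 hal
      S hS0 hSe (by omega)
    omega
  · intro hk
    apply le_antisymm (hle.2 hk)
    by_contra h
    push_neg at h
    have hne : g.oddlevel (P.w k) ≠ ⊤ := fun hh => by
      rw [hh] at h
      exact (not_top_lt h)
    obtain ⟨S, hS0, hSe, hSpar, hSlen⟩ := exists_odd_AP hne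
    have hlt : (S.n : ℕ∞) < (k : ℕ∞) := by
      rw [hSlen]
      exact h
    rw [Nat.cast_lt] at hlt
    have := noshort P Q htm hPf hQf hPv hQv hPe hPp hQo hQp hsum k hk1 hk2 hal
      S hS0 hSe (by omega)
    omega

end MatchedGraph
namespace MatchedGraph

variable {g : MatchedGraph V}

/-- Functional version of a `Bset` witness along an evenlevel path. -/
def EvenWit (g : MatchedGraph V) (v b : V) : Prop :=
  ∃ (P : AP g) (i : ℕ),
    g.unmatched (P.w 0) ∧ P.w P.n = v ∧ P.n % 2 = 0 ∧
    ((P.n : ℕ) : ℕ∞) = g.evenlevel v ∧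
    i < P.n ∧ b = P.w i ∧ g.tenacity v < g.tenacity b ∧
    ∀ k, i < k → k ≤ P.n → g.tenacity (P.w k) ≤ g.tenacity v

/-- Functional version of a `Bset` witness along an oddlevel path. -/
def OddWit (g : MatchedGraph V) (v b : V) : Prop :=
  ∃ (Q : AP g) (i : ℕ),
    g.unmatched (Q.w 0) ∧ Q.w Q.n = v ∧ Q.n % 2 = 1 ∧
    ((Q.n : ℕ) : ℕ∞) = g.oddlevel v ∧
    i < Q.n ∧ b = Q.w i ∧ g.tenacity v < g.tenacity b ∧
    ∀ k, i < k → k ≤ Q.n → g.tenacity (Q.w k) ≤ g.tenacity v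

lemma unpack_Bset {v b : V} (hb : b ∈ g.Bset v) :
    g.EvenWit v b ∨ g.OddWit v b := by
  obtain ⟨p, f, i, hpq, hilen, hbi, htlt, hall⟩ := hb
  rcases hpq with heven | hodd
  · left
    obtain ⟨⟨hf, hap⟩, hev, hlen⟩ := heven
    obtain ⟨P, hw, hn, h0, hend⟩ := ofAltPath hap
    have hgw : ∀ j, P.w j = p.getD j f := fun j => by rw [hw]
    have hiP : i ≤ P.n := by omega
    have hbw : b = P.w i := by rw [hgw i, hbi]
    have hilt : i < P.n := by
      rcases eq_or_lt_of_le hiP with h | h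
      · exfalso
        rw [h, hend] at hbw
        rw [hbw] at htlt
        exact lt_irrefl _ htlt
      · exact h
    refine ⟨P, i, h0 ▸ hf, hend, ?_, ?_, hilt, hbw, htlt, ?_⟩
    · have : P.n = p.length - 1 := by omega
      rw [this]
      exact Nat.even_iff.mp hev
    · have : P.n = p.length - 1 := by omega
      rw [this, ← hlen]
    · intro k hik hkP
      rw [hgw k]
      exact hall k hik (by omega)
  · right
    obtain ⟨⟨hf, hap⟩, hev, hlen⟩ := hodd
    obtain ⟨P, hw, hn, h0, hend⟩ := ofAltPath hap
    have hgw : ∀ j, P.w j = p.getD j f := fun j => by rw [hw]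
    have hiP : i ≤ P.n := by omega
    have hbw : b = P.w i := by rw [hgw i, hbi]
    have hilt : i < P.n := by
      rcases eq_or_lt_of_le hiP with h | h
      · exfalso
        rw [h, hend] at hbw
        rw [hbw] at htlt
        exact lt_irrefl _ htlt
      · exact h
    refine ⟨P, i, h0 ▸ hf, hend, ?_, ?_, hilt, hbw, htlt, ?_⟩
    · have : P.n = p.length - 1 := by omega
      rw [this]
      exact Nat.odd_iff.mp hev
    · have : P.n = p.length - 1 := by omega
      rw [this, ← hlen]
    · intro k hik hkP
      rw [hgw k]
      exact hall k hik (by omega)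

lemma pack_even {v b : V} (h : g.EvenWit v b) : b ∈ g.Bset v := by
  obtain ⟨P, i, hf, hv, hpar, hlev, hi, hb, hlt, hall⟩ := h
  refine ⟨P.toList, P.w 0, i, Or.inl ⟨⟨hf, ?_⟩, ?_, ?_⟩, ?_, ?_, hlt, ?_⟩
  · have := P.toList_altPath
    rwa [hv] at this
  · rw [P.toList_length]
    simp only [Nat.add_sub_cancel]
    exact Nat.even_iff.mpr hpar
  · rw [P.toList_length]
    simp only [Nat.add_sub_cancel]
    exact hlev
  · rw [P.toList_length]
    omega
  · rw [P.toList_getD i (by omega)]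
    exact hb
  · intro k hk hklen
    rw [P.toList_length] at hklen
    rw [P.toList_getD k (by omega)]
    exact hall k hk (by omega)

lemma pack_odd {v b : V} (h : g.OddWit v b) : b ∈ g.Bset v := by
  obtain ⟨P, i, hf, hv, hpar, hlev, hi, hb, hlt, hall⟩ := h
  refine ⟨P.toList, P.w 0, i, Or.inr ⟨⟨hf, ?_⟩, ?_, ?_⟩, ?_, ?_, hlt, ?_⟩
  · have := P.toList_altPath
    rwa [hv] at this
  · rw [P.toList_length]
    simp only [Nat.add_sub_cancel]
    exact Nat.odd_iff.mpr hpar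
  · rw [P.toList_length]
    simp only [Nat.add_sub_cancel]
    exact hlev
  · rw [P.toList_length]
    omega
  · rw [P.toList_getD i (by omega)]
    exact hb
  · intro k hk hklen
    rw [P.toList_length] at hklen
    rw [P.toList_getD k (by omega)]
    exact hall k hk (by omega)

end MatchedGraph
namespace MatchedGraph

variable {g : MatchedGraph V}

lemma pair_eq {t : ℕ} {v : V} (htm : g.tm = (t : ℕ∞))
    (hv : g.tenacity v = (t : ℕ∞))
    (IH : ∀ u, g.tenacity u = (t : ℕ∞) → g.minlevel u < g.minlevel v →
      ∃ β, g.Bset u = {β})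
    {b1 b2 : V} (h1 : g.EvenWit v b1) (h2 : g.OddWit v b2) : b1 = b2 := by
  obtain ⟨P, i, hPf, hPv, hPp, hPe, hi, hb1, hlt1, hall1⟩ := h1
  obtain ⟨Q, i', hQf, hQv, hQp, hQo, hi', hb2, hlt2, hall2⟩ := h2
  have L0 : ∀ u : V, (t : ℕ∞) ≤ g.tenacity u := by
    intro u
    rw [← htm]
    exact g.tm_le_tenacity u
  have hsum : P.n + Q.n = t := by
    have hcast : ((P.n + Q.n : ℕ) : ℕ∞) = (t : ℕ∞) := by
      push_cast
      rw [hPe, hQo]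
      exact hv
    exact_mod_cast hcast
  have halign := align P Q htm hPf hQf hPv hQv hPe hPp hQo hQp hsum
  -- tenacity of the two base candidates
  have hten1 : (t : ℕ∞) < g.tenacity (P.w i) := by
    rw [← hb1, ← hv]
    exact hlt1
  have hten2 : (t : ℕ∞) < g.tenacity (Q.w i') := by
    rw [← hb2, ← hv]
    exact hlt2
  -- two aligned intersection points
  obtain ⟨j1, k1, hj1, hk1m, hk1B, heqk1⟩ := down_gen P Q htm hPf hQf
    (hPv.trans hQv.symm) (by omega) hsum i' (by omega) hten2
  have hk1al : j1 = k1 := by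
    rcases halign j1 k1 hj1 (by omega) heqk1 with h | h
    · exact h
    · omega
  rw [hk1al] at heqk1
  have hk1P : k1 < P.n := by
    rcases eq_or_lt_of_le (hk1al ▸ hj1) with h | h
    · exfalso
      rw [h, hPv, ← hQv] at heqk1
      have := Q.inj (le_refl _) (by omega) heqk1
      omega
    · exact h
  obtain ⟨j2, k2, hj2, hk2m, hk2B, heqk2⟩ := down_gen Q P htm hQf hPf
    (hQv.trans hPv.symm) (by omega) (by omega) i (by omega) hten1
  have hk2al : k2 = j2 := by
    rcases halign k2 j2 (by omega) hj2 heqk2.symm with h | h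
    · exact h
    · omega
  have heqk2' : P.w k2 = Q.w k2 := by
    rw [← hk2al] at heqk2
    exact heqk2.symm
  have hk2Q : k2 < Q.n := by
    rcases eq_or_lt_of_le (hk2al ▸ hj2 : k2 ≤ Q.n) with h | h
    · exfalso
      rw [h, hQv, ← hPv] at heqk2'
      have := P.inj (by omega) (le_refl _) heqk2'
      omega
    · exact h
  -- the last aligned vertex
  set Al : ℕ → Prop := fun z => z < P.n ∧ z < Q.n ∧ P.w z = Q.w z with hAldef
  have hAl1 : Al k1 := ⟨hk1P, hk1B, heqk1⟩
  have hAl2 : Al k2 := ⟨hk2B, hk2Q, heqk2'⟩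
  set a : ℕ := Nat.findGreatest Al P.n with hadef
  have haA : Al a := Nat.findGreatest_spec (by omega) hAl1
  have ha1 : k1 ≤ a := Nat.le_findGreatest (by omega) hAl1
  have ha2 : k2 ≤ a := Nat.le_findGreatest (by omega) hAl2
  obtain ⟨haP, haQ, haeq⟩ := haA
  have hia : i ≤ a := le_trans hk2m ha2
  have hia' : i' ≤ a := le_trans hk1m ha1
  by_cases hcase1 : i = a
  · -- base of p is aligned
    have hb1Q : b1 = Q.w a := by
      rw [hb1, hcase1, haeq]
    have haI : a ≤ i' := by
      by_contra hcon
      push_neg at hcon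
      have := hall2 a hcon (le_of_lt haQ)
      rw [← hb1Q] at this
      exact absurd hlt1 (not_lt.mpr this)
    have : i' = a := by omega
    rw [hb1Q, hb2, this]
  · by_cases hcase2 : i' = a
    · exfalso
      have hb2P : b2 = P.w a := by
        rw [hb2, hcase2, ← haeq]
      have hina : i < a := by omega
      have := hall1 a hina (le_of_lt haP)
      rw [← hb2P] at this
      exact absurd hlt2 (not_lt.mpr this)
    · -- the inductive case
      have hina : i < a := by omega
      have hina' : i' < a := by omega
      set u : V := P.w a with hudef
      have htu_le : g.tenacity u ≤ (t : ℕ∞) := by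
        rw [← hv]
        exact hall1 a hina (le_of_lt haP)
      have htu : g.tenacity u = (t : ℕ∞) := le_antisymm htu_le (L0 u)
      have hlev := level_eq_aligned P Q htm hPf hQf hPv hQv hPe hPp hQo hQp
        hsum a haP haQ haeq
      have hminv : g.minlevel v = min ((P.n : ℕ∞)) ((Q.n : ℕ∞)) := by
        rw [minlevel, ← hPe, ← hQo]
      have hminu : g.minlevel u < g.minlevel v := by
        rw [hminv]
        rcases Nat.even_or_odd a with ha | ha
        · have hlev1 := hlev.1 (Nat.even_iff.mp ha)
          calc g.minlevel u ≤ g.evenlevel u := min_le_left _ _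
          _ = (a : ℕ∞) := hlev1
          _ < min ((P.n : ℕ∞)) ((Q.n : ℕ∞)) :=
            lt_min (Nat.cast_lt.mpr haP) (Nat.cast_lt.mpr haQ)
        · have hlev2 := hlev.2 (Nat.odd_iff.mp ha)
          calc g.minlevel u ≤ g.oddlevel u := min_le_right _ _
          _ = (a : ℕ∞) := hlev2
          _ < min ((P.n : ℕ∞)) ((Q.n : ℕ∞)) :=
            lt_min (Nat.cast_lt.mpr haP) (Nat.cast_lt.mpr haQ)
      obtain ⟨β, hβ⟩ := IH u htu hminu
      have huv : g.tenacity u = g.tenacity v := by rw [htu, hv]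
      have hmem1 : b1 ∈ g.Bset u := by
        have hwit : ∀ (hpar2 : a % 2 = 0 ∨ a % 2 = 1),
            True := fun _ => trivial
        rcases Nat.even_or_odd a with ha | ha
        · apply pack_even
          refine ⟨P.trunc a (le_of_lt haP), i, by simpa using hPf, rfl, ?_,
            ?_, hina, hb1, ?_, ?_⟩
          · simpa using (Nat.even_iff.mp ha)
          · simp only [AP.trunc_n, AP.trunc_w]
            exact (hlev.1 (Nat.even_iff.mp ha)).symm
          · rw [huv]
            exact hlt1
          · intro k hk1' hk2'
            simp only [AP.trunc_w]
            rw [huv]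
            exact hall1 k hk1' (le_trans (by simpa using hk2') (le_of_lt haP))
        · apply pack_odd
          refine ⟨P.trunc a (le_of_lt haP), i, by simpa using hPf, rfl, ?_,
            ?_, hina, hb1, ?_, ?_⟩
          · simpa using (Nat.odd_iff.mp ha)
          · simp only [AP.trunc_n, AP.trunc_w]
            exact (hlev.2 (Nat.odd_iff.mp ha)).symm
          · rw [huv]
            exact hlt1
          · intro k hk1' hk2'
            simp only [AP.trunc_w]
            rw [huv]
            exact hall1 k hk1' (le_trans (by simpa using hk2') (le_of_lt haP))
      have hmem2 : b2 ∈ g.Bset u := by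
        rcases Nat.even_or_odd a with ha | ha
        · apply pack_even
          refine ⟨Q.trunc a (le_of_lt haQ), i', by simpa using hQf, ?_, ?_,
            ?_, hina', hb2, ?_, ?_⟩
          · simp only [AP.trunc_n, AP.trunc_w]
            exact haeq.symm
          · simpa using (Nat.even_iff.mp ha)
          · simp only [AP.trunc_n, AP.trunc_w]
            exact (hlev.1 (Nat.even_iff.mp ha)).symm
          · rw [huv]
            exact hlt2
          · intro k hk1' hk2'
            simp only [AP.trunc_w]
            rw [huv]
            exact hall2 k hk1' (le_trans (by simpa using hk2') (le_of_lt haQ))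
        · apply pack_odd
          refine ⟨Q.trunc a (le_of_lt haQ), i', by simpa using hQf, ?_, ?_,
            ?_, hina', hb2, ?_, ?_⟩
          · simp only [AP.trunc_n, AP.trunc_w]
            exact haeq.symm
          · simpa using (Nat.odd_iff.mp ha)
          · simp only [AP.trunc_n, AP.trunc_w]
            exact (hlev.2 (Nat.odd_iff.mp ha)).symm
          · rw [huv]
            exact hlt2
          · intro k hk1' hk2'
            simp only [AP.trunc_w]
            rw [huv]
            exact hall2 k hk1' (le_trans (by simpa using hk2') (le_of_lt haQ))
      rw [hβ] at hmem1 hmem2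
      rw [Set.mem_singleton_iff] at hmem1 hmem2
      rw [hmem1, hmem2]

end MatchedGraph
/-- Every vertex `v` of minimum tenacity `t_m` has a well-defined
base: the set `B(v)` is a singleton, provided `t_m < l_m`. -/
theorem Bset_singleton_of_min_tenacity (g : MatchedGraph V) (v : V)
    (h1 : g.tenacity v = g.tm) (h2 : g.tm < g.lm) :
    ∃ b, g.Bset v = {b} := by
  have htop : g.tm ≠ ⊤ := ne_top_of_lt h2
  obtain ⟨t, htm⟩ : ∃ t : ℕ, g.tm = (t : ℕ∞) := by
    obtain ⟨t, ht⟩ := WithTop.ne_top_iff_exists.mp htop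
    exact ⟨t, ht.symm⟩
  have hten : g.tenacity v = (t : ℕ∞) := by rw [h1, htm]
  suffices H : ∀ n : ℕ, ∀ u : V, g.tenacity u = (t : ℕ∞) →
      g.minlevel u = (n : ℕ∞) → ∃ b, g.Bset u = {b} by
    have hminlt : g.minlevel v ≠ ⊤ := by
      intro hh
      have h3 : g.evenlevel v + g.oddlevel v = (t : ℕ∞) := hten
      have hle : g.minlevel v ≤ g.evenlevel v := min_le_left _ _
      rw [hh] at hle
      rw [top_le_iff.mp hle, top_add] at h3
      exact (by simp : (⊤ : ℕ∞) ≠ (t : ℕ∞)) h3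
    exact H (g.minlevel v).toNat v hten (ENat.coe_toNat hminlt).symm
  intro n
  induction n using Nat.strong_induction_on with
  | _ n IH =>
  intro u htu hmin
  have hevtop : g.evenlevel u ≠ ⊤ := by
    intro hh
    have h3 : g.evenlevel u + g.oddlevel u = (t : ℕ∞) := htu
    rw [hh, top_add] at h3
    exact (by simp : (⊤ : ℕ∞) ≠ (t : ℕ∞)) h3
  have hodtop : g.oddlevel u ≠ ⊤ := by
    intro hh
    have h3 : g.evenlevel u + g.oddlevel u = (t : ℕ∞) := htu
    rw [hh, add_top] at h3
    exact (by simp : (⊤ : ℕ∞) ≠ (t : ℕ∞)) h3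
  obtain ⟨P, hPf, hPv, hPp, hPe⟩ := g.exists_even_AP hevtop
  obtain ⟨Q, hQf, hQv, hQp, hQo⟩ := g.exists_odd_AP hodtop
  have IH' : ∀ w, g.tenacity w = (t : ℕ∞) → g.minlevel w < g.minlevel u →
      ∃ β, g.Bset w = {β} := by
    intro w htw hlt
    have hwtop : g.minlevel w ≠ ⊤ := by
      intro hh
      rw [hh] at hlt
      exact not_top_lt hlt
    apply IH (g.minlevel w).toNat ?_ w htw (ENat.coe_toNat hwtop).symm
    have hlt2 : g.minlevel w < (n : ℕ∞) := hmin ▸ hlt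
    rw [← ENat.coe_toNat hwtop, Nat.cast_lt] at hlt2
    exact hlt2
  have hstart : ∀ (R : MatchedGraph.AP g), g.unmatched (R.w 0) →
      (t : ℕ∞) < g.tenacity (R.w 0) := by
    intro R h0
    calc (t : ℕ∞) = g.tm := htm.symm
    _ < g.lm := h2
    _ ≤ g.tenacity (R.w 0) := MatchedGraph.lm_le_tenacity_unmatched h0
  -- the base point along P
  set AlP : ℕ → Prop := fun j => (t : ℕ∞) < g.tenacity (P.w j) with hAlP
  set i : ℕ := Nat.findGreatest AlP P.n with hidef
  have hspecP : AlP i := Nat.findGreatest_spec (Nat.zero_le _) (hstart P hPf)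
  have hileP : i ≤ P.n := Nat.findGreatest_le _
  have hiP : i < P.n := by
    rcases eq_or_lt_of_le hileP with h | h
    · exfalso
      rw [hAlP] at hspecP
      rw [h, hPv, htu] at hspecP
      exact lt_irrefl _ hspecP
    · exact h
  have hwit1 : g.EvenWit u (P.w i) := by
    refine ⟨P, i, hPf, hPv, hPp, hPe, hiP, rfl, ?_, ?_⟩
    · rw [htu]
      exact hspecP
    · intro k hk hkP
      rw [htu]
      have := Nat.findGreatest_is_greatest (hidef ▸ hk) hkP
      rw [hAlP] at this
      exact not_lt.mp this
  -- the base point along Q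
  set AlQ : ℕ → Prop := fun j => (t : ℕ∞) < g.tenacity (Q.w j) with hAlQ
  set i' : ℕ := Nat.findGreatest AlQ Q.n with hidef'
  have hspecQ : AlQ i' := Nat.findGreatest_spec (Nat.zero_le _) (hstart Q hQf)
  have hileQ : i' ≤ Q.n := Nat.findGreatest_le _
  have hiQ : i' < Q.n := by
    rcases eq_or_lt_of_le hileQ with h | h
    · exfalso
      rw [hAlQ] at hspecQ
      rw [h, hQv, htu] at hspecQ
      exact lt_irrefl _ hspecQ
    · exact h
  have hwit2 : g.OddWit u (Q.w i') := by
    refine ⟨Q, i', hQf, hQv, hQp, hQo, hiQ, rfl, ?_, ?_⟩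
    · rw [htu]
      exact hspecQ
    · intro k hk hkP
      rw [htu]
      have := Nat.findGreatest_is_greatest (hidef' ▸ hk) hkP
      rw [hAlQ] at this
      exact not_lt.mp this
  have hp12 : P.w i = Q.w i' := MatchedGraph.pair_eq htm htu IH' hwit1 hwit2
  refine ⟨Q.w i', ?_⟩
  apply Set.eq_singleton_iff_unique_mem.mpr
  refine ⟨MatchedGraph.pack_odd hwit2, ?_⟩
  intro x hx
  rcases MatchedGraph.unpack_Bset hx with hxw | hxw
  · exact MatchedGraph.pair_eq htm htu IH' hxw hwit2
  · have hx1 : P.w i = x := MatchedGraph.pair_eq htm htu IH' hwit1 hxw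
    exact hx1.symm.trans hp12
end

section
/- If (u, v) is a matched bridge with tenacity(u, v) <= l_m, then both u and v are inner vertices (i.e., their minlevels are odd). -/
open scoped Classical

universe u

variable {V : Type u}

namespace MatchedGraph

lemma pred_of_matched_outer (g : MatchedGraph V) (u v : V)
    (hm : g.M u v) (ho : g.IsOuter u) : g.IsPred v u := by
  -- evenlevel u is finite
  have hne : g.evenlevel u ≠ ⊤ := fun h => by
    simp only [IsOuter, h] at ho; exact (not_top_lt ho)
  have hS : {n : ℕ∞ | ∃ p f, g.AltPathFrom p f u ∧ Even (p.length - 1) ∧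
      n = ((p.length - 1 : ℕ) : ℕ∞)}.Nonempty := by
    by_contra h
    rw [Set.not_nonempty_iff_eq_empty] at h
    exact hne (by rw [evenlevel, h]; exact sInf_empty)
  have hmem := csInf_mem hS
  obtain ⟨p, f, hap, heven, hlen⟩ := hmem
  obtain ⟨hum, hh, hl, hnd, hstep⟩ := hap
  have hpne : p ≠ [] := by intro h; simp [h] at hh
  have hlp : 1 ≤ p.length := List.length_pos_iff.2 hpne
  -- last element is u
  have hlast : p.getD (p.length - 1) f = u := by
    have := List.getLast?_eq_getLast hpne
    rw [this] at hl
    have : p.getLast hpne = u := by injection hl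
    rw [List.getD_eq_getElem?_getD, List.getElem?_eq_getElem (by omega)]
    rw [← this, List.getLast_eq_getElem]
    rfl
  -- length at least 2, else u unmatched
  have h2 : 2 ≤ p.length := by
    by_contra h
    have h1 : p.length = 1 := by omega
    obtain ⟨x, hx⟩ : ∃ x, p = [x] := List.length_eq_one_iff.1 h1
    subst hx
    simp only [List.head?_cons, List.getLast?_singleton, Option.some.injEq] at hh hl
    exact hum v (by rw [← hh, hl]; exact hm)
  -- L := p.length - 1 is even and ≥ 1, so the index p.length - 2 is odd
  have hodd : (p.length - 2) % 2 = 1 := by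
    obtain ⟨k, hk⟩ := heven
    omega
  have hstep' := hstep (p.length - 2) (by omega)
  have hidx : p.length - 2 + 1 = p.length - 1 := by omega
  rw [hidx, hlast] at hstep'
  have hmatch : g.M (p.getD (p.length - 2) f) u := (hstep'.2).2 hodd
  have hveq : v = p.getD (p.length - 2) f :=
    g.M_matching u v _ hm (g.M_symm _ _ hmatch)
  refine ⟨p, f, ⟨⟨hum, hh, hl, hnd, hstep⟩, ?_⟩, h2, hveq.symm⟩
  have hml : g.minlevel u = g.evenlevel u := min_eq_left ho.le
  rw [hml]
  exact hlen.symm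

lemma inner_of_matched_bridge_aux (g : MatchedGraph V) (u v : V)
    (hm : g.M u v) (hb : g.IsBridge u v) : g.IsInner u := by
  by_contra h
  have ho : g.IsOuter u := lt_of_not_ge h
  exact hb.2 (Or.inr (g.pred_of_matched_outer u v hm ho))

end MatchedGraph

/-- If `(u, v)` is a matched bridge with `tenacity(u, v) ≤ l_m`,
then both `u` and `v` are inner vertices. -/
theorem inner_of_matched_bridge (g : MatchedGraph V) (u v : V)
    (hm : g.M u v) (hb : g.IsBridge u v) (ht : g.etenacity u v ≤ g.lm) :
    g.IsInner u ∧ g.IsInner v := by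
  refine ⟨g.inner_of_matched_bridge_aux u v hm hb, ?_⟩
  refine g.inner_of_matched_bridge_aux v u (g.M_symm _ _ hm) ?_
  exact ⟨g.symm _ _ hb.1, fun h => hb.2 h.symm⟩
end

section
/- Let (u, v) be an unmatched bridge with tenacity(u, v) <= l_m where both u and v are outer vertices. Then evenlevel(u) = evenlevel(v), and tenacity(u) = tenacity(v) = tenacity(u, v). -/
open scoped Classical

universe u

variable {V : Type u}

section AuxProofs

variable {V : Type u}

namespace MatchedGraph

private lemma getD_eq_getElem {p : List V} {j : ℕ} (hj : j < p.length) (d : V) :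
    p.getD j d = p[j] := by
  rw [List.getD_eq_getElem?_getD, List.getElem?_eq_getElem hj, Option.getD_some]

private lemma evenlevel_le' {g : MatchedGraph V} {p : List V} {f v : V}
    (h : g.AltPathFrom p f v) (he : Even (p.length - 1)) :
    g.evenlevel v ≤ ((p.length - 1 : ℕ) : ℕ∞) :=
  sInf_le ⟨p, f, h, he, rfl⟩

private lemma oddlevel_le' {g : MatchedGraph V} {p : List V} {f v : V}
    (h : g.AltPathFrom p f v) (he : Odd (p.length - 1)) :
    g.oddlevel v ≤ ((p.length - 1 : ℕ) : ℕ∞) :=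
  sInf_le ⟨p, f, h, he, rfl⟩

private lemma exists_evenlevel_path' {g : MatchedGraph V} {v : V}
    (h : g.evenlevel v ≠ ⊤) :
    ∃ p f, g.AltPathFrom p f v ∧ Even (p.length - 1) ∧
      ((p.length - 1 : ℕ) : ℕ∞) = g.evenlevel v := by
  rw [evenlevel] at h ⊢
  set S := {n : ℕ∞ | ∃ p f, g.AltPathFrom p f v ∧ Even (p.length - 1) ∧
      n = ((p.length - 1 : ℕ) : ℕ∞)} with hS
  have hne : S.Nonempty := by
    by_contra hc
    rw [Set.not_nonempty_iff_eq_empty] at hc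
    rw [hc, sInf_empty] at h
    exact h rfl
  obtain ⟨p, f, h1, h2, h3⟩ := csInf_mem hne
  exact ⟨p, f, h1, h2, h3.symm⟩

private lemma altPath_take {g : MatchedGraph V} {p : List V} {f v : V}
    (h : g.AltPath p f v) {j : ℕ} (hj : j < p.length) :
    g.AltPath (p.take (j + 1)) f (p.getD j f) := by
  obtain ⟨h1, _h2, h3, h4⟩ := h
  have hlen : (p.take (j + 1)).length = j + 1 := by rw [List.length_take]; omega
  have hgd : ∀ i, i < j + 1 → (p.take (j + 1)).getD i f = p.getD i f := by
    intro i hi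
    rw [List.getD_eq_getElem?_getD, List.getD_eq_getElem?_getD, List.getElem?_take,
      if_pos hi]
  refine ⟨?_, ?_, h3.sublist (List.take_sublist _ _), ?_⟩
  · rw [List.head?_eq_getElem?] at h1 ⊢
    rw [List.getElem?_take, if_pos (by omega)]
    exact h1
  · rw [List.getLast?_eq_getElem?, hlen]
    simp only [Nat.add_sub_cancel]
    rw [List.getElem?_take, if_pos (by omega), List.getElem?_eq_getElem hj,
      getD_eq_getElem hj]
  · intro i hi
    rw [hlen] at hi
    rw [hgd i (by omega), hgd (i + 1) (by omega)]
    exact h4 i (by omega)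

private lemma altPath_append {g : MatchedGraph V} {p : List V} {f u w : V}
    (h : g.AltPath p f u) (he : Even (p.length - 1)) (hadj : g.adj u w)
    (hm : ¬ g.M u w) (hw : w ∉ p) : g.AltPath (p ++ [w]) f w := by
  obtain ⟨h1, h2, h3, h4⟩ := h
  have hpne : p ≠ [] := by
    intro hc; rw [hc] at h1; exact absurd h1 (by simp)
  have hlp : 1 ≤ p.length := List.length_pos_iff.2 hpne
  have hgd : ∀ i, i < p.length → (p ++ [w]).getD i f = p.getD i f := by
    intro i hi
    rw [List.getD_eq_getElem?_getD, List.getD_eq_getElem?_getD,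
      List.getElem?_append_left hi]
  have hgdw : (p ++ [w]).getD p.length f = w := by
    rw [List.getD_eq_getElem?_getD]
    simp
  have hlast : p.getD (p.length - 1) f = u := by
    rw [List.getLast?_eq_getElem?] at h2
    rw [List.getD_eq_getElem?_getD, h2, Option.getD_some]
  refine ⟨?_, ?_, ?_, ?_⟩
  · cases p with
    | nil => exact absurd rfl hpne
    | cons x t => exact h1
  · exact List.getLast?_concat
  · rw [List.nodup_append]
    exact ⟨h3, List.nodup_singleton w,
      fun x hx y hy => by simp only [List.mem_singleton] at hy; subst hy; exact fun hxy => hw (hxy ▸ hx)⟩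
  · intro i hi
    rw [List.length_append, List.length_singleton] at hi
    rcases lt_or_eq_of_le (Nat.lt_succ_iff.mp hi) with hi' | hi'
    · rw [hgd i (by omega), hgd (i + 1) (by omega)]
      exact h4 i hi'
    · have hieq : i = p.length - 1 := by omega
      rw [hgd i (by omega), hi', hgdw, hieq, hlast]
      constructor
      · exact hadj
      · constructor
        · intro hM; exact absurd hM hm
        · intro hpar
          exfalso
          rw [Nat.even_iff] at he
          omega

private lemma key_lemma {g : MatchedGraph V} {u v : V} (hadj : g.adj u v)
    (hm : ¬ g.M u v) (hu : g.IsOuter u) (hv : g.IsOuter v)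
    (hle : g.evenlevel u ≤ g.evenlevel v) :
    g.evenlevel u = g.evenlevel v ∧ g.oddlevel v = g.evenlevel u + 1 := by
  have hneu : g.evenlevel u ≠ ⊤ := hu.ne_top
  obtain ⟨p, f, hpf, hpe, hplen⟩ := exists_evenlevel_path' hneu
  obtain ⟨hfu, hap⟩ := hpf
  have hvne : v ≠ u := by
    intro hc; subst hc; exact g.loopless v hadj
  have hpne : p ≠ [] := by
    intro hc; rw [hc] at hap; exact absurd hap.1 (by simp)
  have hlp : 1 ≤ p.length := List.length_pos_iff.2 hpne
  have hlast : p.getD (p.length - 1) f = u := by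
    have h2 := hap.2.1
    rw [List.getLast?_eq_getElem?] at h2
    rw [List.getD_eq_getElem?_getD, h2, Option.getD_some]
  by_cases hvp : v ∈ p
  · exfalso
    obtain ⟨j, hj, hjv⟩ := List.mem_iff_getElem.mp hvp
    have hgdj : p.getD j f = v := by rw [getD_eq_getElem hj, hjv]
    have hjlt : j < p.length - 1 := by
      rcases lt_or_eq_of_le (by omega : j ≤ p.length - 1) with h' | h'
      · exact h'
      · exfalso; rw [h'] at hgdj; rw [hlast] at hgdj; exact hvne hgdj.symm
    have hpre : g.AltPathFrom (p.take (j + 1)) f v := by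
      refine ⟨hfu, ?_⟩
      have := altPath_take hap hj
      rwa [hgdj] at this
    have hprelen : (p.take (j + 1)).length - 1 = j := by
      rw [List.length_take]; omega
    have hjlt' : (j : ℕ∞) < g.evenlevel u := by
      rw [← hplen, Nat.cast_lt]; exact hjlt
    rcases Nat.even_or_odd j with hje | hjo
    · have h1 : g.evenlevel v ≤ (j : ℕ∞) := by
        have := evenlevel_le' hpre (by rw [hprelen]; exact hje)
        rwa [hprelen] at this
      exact absurd (lt_of_le_of_lt (hle.trans h1) hjlt') (lt_irrefl _)
    · have h1 : g.oddlevel v ≤ (j : ℕ∞) := by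
        have := oddlevel_le' hpre (by rw [hprelen]; exact hjo)
        rwa [hprelen] at this
      have : g.evenlevel v < (j : ℕ∞) := lt_of_lt_of_le hv h1
      exact absurd (lt_trans (lt_of_le_of_lt hle this) hjlt') (lt_irrefl _)
  · have hq : g.AltPathFrom (p ++ [v]) f v :=
      ⟨hfu, altPath_append hap hpe hadj hm hvp⟩
    have hqlen : (p ++ [v]).length - 1 = p.length := by
      rw [List.length_append, List.length_singleton]; omega
    have hqodd : Odd ((p ++ [v]).length - 1) := by
      rw [hqlen]
      rcases Nat.even_or_odd p.length with h' | h'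
      · exfalso; rw [Nat.even_iff] at h' hpe; omega
      · exact h'
    have h1 : g.oddlevel v ≤ (p.length : ℕ∞) := by
      have := oddlevel_le' hq hqodd
      rwa [hqlen] at this
    have hcast : (p.length : ℕ∞) = g.evenlevel u + 1 := by
      have h' : p.length = (p.length - 1) + 1 := by omega
      rw [← hplen]
      conv_lhs => rw [h']
      rw [Nat.cast_add, Nat.cast_one]
    rw [hcast] at h1
    have h3 : g.evenlevel v ≤ g.evenlevel u :=
      (ENat.lt_add_one_iff hneu).mp (lt_of_lt_of_le hv h1)
    have heq : g.evenlevel u = g.evenlevel v := le_antisymm hle h3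
    refine ⟨heq, le_antisymm h1 ?_⟩
    rw [ENat.add_one_le_iff hneu, heq]
    exact hv

end MatchedGraph

end AuxProofs

/-- Let `(u, v)` be an unmatched bridge with
`tenacity(u, v) ≤ l_m` whose endpoints are both outer. Then
`evenlevel(u) = evenlevel(v)` and `tenacity(u) = tenacity(v) = tenacity(u, v)`. -/
theorem outer_outer_unmatched_bridge (g : MatchedGraph V) (u v : V)
    (hm : ¬ g.M u v) (hb : g.IsBridge u v) (ht : g.etenacity u v ≤ g.lm)
    (hu : g.IsOuter u) (hv : g.IsOuter v) :
    g.evenlevel u = g.evenlevel v ∧ g.tenacity u = g.tenacity v ∧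
      g.tenacity v = g.etenacity u v := by
  have hadj : g.adj u v := hb.1
  have hadj' : g.adj v u := g.symm u v hadj
  have hm' : ¬ g.M v u := fun h => hm (g.M_symm v u h)
  have main : g.evenlevel u = g.evenlevel v ∧ g.oddlevel v = g.evenlevel u + 1 ∧
      g.oddlevel u = g.evenlevel v + 1 := by
    rcases le_total (g.evenlevel u) (g.evenlevel v) with hle | hle
    · obtain ⟨heq, hov⟩ := MatchedGraph.key_lemma hadj hm hu hv hle
      obtain ⟨_, hou⟩ := MatchedGraph.key_lemma hadj' hm' hv hu heq.ge
      exact ⟨heq, hov, hou⟩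
    · obtain ⟨heq, hou⟩ := MatchedGraph.key_lemma hadj' hm' hv hu hle
      obtain ⟨_, hov⟩ := MatchedGraph.key_lemma hadj hm hu hv heq.ge
      exact ⟨heq.symm, hov, hou⟩
  obtain ⟨heq, hov, hou⟩ := main
  refine ⟨heq, ?_, ?_⟩
  · rw [MatchedGraph.tenacity, MatchedGraph.tenacity, hou, hov, heq]
  · rw [MatchedGraph.tenacity, hov, MatchedGraph.etenacity, if_neg hm, heq, add_assoc]
end

section
/- If v belongs to the blossom B_{b,t}, then there exists k with 1 <= k <= N(B_{b,t}) such that b = base^k(v), and moreover base(v), base^2(v), ..., base^{k-1}(v) all belong to B_{b,t}, where N denotes nesting depth. -/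
open scoped Classical

universe u

variable {V : Type u}

lemma baseOf_unique (g : MatchedGraph V) {u b b' : V} (h : g.baseOf u b)
    (h' : g.baseOf u b') : b = b' := by
  have : ({b} : Set V) = {b'} := h.symm.trans h'
  simpa [Set.singleton_eq_singleton_iff] using this

lemma iterBase_unique (g : MatchedGraph V) :
    ∀ k (v u u' : V), g.iterBase k v u → g.iterBase k v u' → u = u' := by
  intro k
  induction k with
  | zero => intro v u u' h h'; exact h.symm.trans h'
  | succ k ih =>
    rintro v u u' ⟨w, hw, hb⟩ ⟨w', hw', hb'⟩
    obtain rfl := ih v w w' hw hw'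
    exact baseOf_unique g hb hb'

lemma blossom_aux [Fintype V] (g : MatchedGraph V) :
    ∀ t (b v : V), v ∈ g.blossom t b →
    ∃ k, 1 ≤ k ∧ k ≤ g.ndepth t b ∧ g.iterBase k v b ∧
      ∀ j u, 1 ≤ j → j < k → g.iterBase j v u → u ∈ g.blossom t b := by
  intro t
  induction t using Nat.strong_induction_on with
  | _ t ih =>
    match t with
    | 0 => intro b v hv; simp [MatchedGraph.blossom] at hv
    | 1 => intro b v hv; simp [MatchedGraph.blossom] at hv
    | (t + 2) =>
      intro b v hv
      rw [MatchedGraph.blossom] at hv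
      have hsub : ∀ w, (w ∈ g.Sset (t + 2) b ∨ w = b) → g.IsOuter w →
          g.blossom t w ⊆ g.blossom (t + 2) b := by
        intro w hw ho x hx
        rw [MatchedGraph.blossom]
        exact Set.mem_union_right _ (Set.mem_biUnion ⟨hw, ho⟩ hx)
      rcases hv with hv | hv
      · -- v ∈ Sset (t+2) b
        refine ⟨1, le_refl 1, ?_, ⟨v, rfl, hv.2⟩, ?_⟩
        · rw [MatchedGraph.ndepth, if_pos ⟨v, hv⟩]
          exact Nat.le_add_right 1 _
        · intro j u h1 h2 _; omega
      · -- v in a sub-blossom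
        rw [Set.mem_iUnion₂] at hv
        obtain ⟨w, ⟨hw, how⟩, hvw⟩ := hv
        obtain ⟨k, hk1, hk2, hkb, hint⟩ := ih t (by omega) w v hvw
        have hfw : (if (w ∈ g.Sset (t + 2) b ∨ w = b) ∧ g.IsOuter w
            then g.ndepth t w else 0) = g.ndepth t w := if_pos ⟨hw, how⟩
        have hsup := Finset.le_sup (f := fun v =>
            if (v ∈ g.Sset (t + 2) b ∨ v = b) ∧ g.IsOuter v
            then g.ndepth t v else 0) (Finset.mem_univ w)
        simp only [hfw] at hsup
        rcases hw with hw | rfl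
        · -- w ∈ Sset (t+2) b
          refine ⟨k + 1, by omega, ?_, ⟨w, hkb, hw.2⟩, ?_⟩
          · rw [MatchedGraph.ndepth, if_pos ⟨w, hw⟩]
            omega
          · intro j u h1 h2 hju
            rcases Nat.lt_or_ge j k with hj | hj
            · exact hsub w (Or.inl hw) how (hint j u h1 hj hju)
            · have hjk : j = k := by omega
              subst hjk
              obtain rfl := iterBase_unique g j v u w hju hkb
              rw [MatchedGraph.blossom]
              exact Set.mem_union_left _ hw
        · -- w = b
          refine ⟨k, hk1, ?_, hkb, ?_⟩
          · rw [MatchedGraph.ndepth]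
            split
            · omega
            · exact hk2
          · intro j u h1 h2 hju
            exact hsub _ (Or.inr rfl) how (hint j u h1 h2 hju)

/-- If `v ∈ B_{b,t}`, then there exists `k` with
`1 ≤ k ≤ N(B_{b,t})` such that `b = base^k(v)`, and moreover
`base(v), …, base^{k-1}(v)` all belong to `B_{b,t}`. -/
theorem iterBase_of_mem_blossom [Fintype V] (g : MatchedGraph V) (t : ℕ)
    (b v : V) (hodd : Odd t)
    (he1 : g.tm ≤ (t : ℕ∞)) (he2 : (t : ℕ∞) < g.lm)
    (houter : g.IsOuter b) (htb : (t : ℕ∞) < g.tenacity b)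
    (hclaim : ∀ w, g.tenacity w ≤ (t : ℕ∞) → ∃ b', g.baseOf w b')
    (hv : v ∈ g.blossom t b) :
    ∃ k, 1 ≤ k ∧ k ≤ g.ndepth t b ∧ g.iterBase k v b ∧
      ∀ j u, 1 ≤ j → j < k → g.iterBase j v u → u ∈ g.blossom t b := by
  exact blossom_aux g t b v hv
end
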